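/- arXiv:2312.17701 — 6 statements merged into one kernel-verified Lean document; each statement's English description precedes it below -/
import Mathlib

section
/- For all real $x > 0$ and $s \in (0,1)$, the Gamma function satisfies $\Gamma(x+s) \leq x^s \, \Gamma(x)$. -/
theorem gamma_add_le (x s : ℝ) (hx : 0 < x) (hs0 : 0 < s) (hs1 : s < 1) :
    Real.Gamma (x + s) ≤ x ^ s * Real.Gamma x := by
  have h := Real.Gamma_mul_add_mul_le_rpow_Gamma_mul_rpow_Gamma hx (by linarith : (0:ℝ) < x + 1)
    (by linarith : 0 < 1 - s) hs0 (by ring)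
  have hG : 0 < Real.Gamma x := Real.Gamma_pos_of_pos hx
  have hx1 : Real.Gamma (x + 1) = x * Real.Gamma x := Real.Gamma_add_one hx.ne'
  calc Real.Gamma (x + s) = Real.Gamma ((1 - s) * x + s * (x + 1)) := by ring_nf
    _ ≤ Real.Gamma x ^ (1 - s) * Real.Gamma (x + 1) ^ s := h
    _ = x ^ s * Real.Gamma x := by
        rw [hx1, Real.mul_rpow hx.le hG.le, mul_comm (x ^ s),
          ← mul_assoc, ← Real.rpow_add hG]
        norm_num [mul_comm]
end

section
/- For all real $x > 0$, we have $x\,\Gamma(x) \geq 0.885$, i.e. $\Gamma(x+1) \geq 0.885$. -/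
open Real Filter Topology

-- ## Taylor bounds for log
lemma log_taylor {u : ℝ} (h0 : 0 ≤ u) (h1 : u ≤ 1/2) :
    u - u^2/2 + u^3/3 - 2*u^4 ≤ Real.log (1+u) ∧
    Real.log (1+u) ≤ u - u^2/2 + u^3/3 + 2*u^4 := by
  have h := Real.abs_log_sub_add_sum_range_le (x := -u) (by rw [abs_neg, abs_of_nonneg h0]; linarith) 3
  simp only [Finset.sum_range_succ, Finset.sum_range_zero] at h
  rw [abs_neg, abs_of_nonneg h0] at h
  have h2 : (1 : ℝ) - -u = 1 + u := by ring
  rw [h2] at h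
  have h3 : u^4/(1-u) ≤ 2*u^4 := by
    rw [div_le_iff₀ (by linarith)]
    nlinarith [pow_nonneg h0 4]
  have h4 := abs_le.mp h
  constructor <;> nlinarith [h4.1, h4.2]


lemma step_low (M x : ℝ) (hM : (64:ℝ) ≤ M) (hx : 0 < x) (hx1 : x ≤ 1) :
    (x+x^2)/2 * (1/(M+1) - 1/(M+2)) ≤
    x*(1/M - 1/(2*M^2) + 1/(3*M^3) - 2/M^4)
      - (x/(M+1) - x^2/(2*(M+1)^2) + x^3/(3*(M+1)^3) + 2*x^4/(M+1)^4) := by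
  have hM0 : (0:ℝ) < M := by linarith
  have h1 : (0:ℝ) < M+1 := by linarith
  have h2 : (0:ℝ) < M+2 := by linarith
  rw [div_mul_eq_mul_div, ← sub_nonneg]
  have key : x*(1/M - 1/(2*M^2) + 1/(3*M^3) - 2/M^4)
      - (x/(M+1) - x^2/(2*(M+1)^2) + x^3/(3*(M+1)^3) + 2*x^4/(M+1)^4)
      - (x+x^2) * (1/(M+1) - 1/(M+2)) / 2
      = x * ((M-2)/(2*M^2*(M+1)*(M+2)) + 1/(3*M^3) - 2/M^4)
        + (x^2 * (1/(2*(M+1)^2*(M+2))) - x^3 * (1/(3*(M+1)^3)) - x^4 * (2/(M+1)^4)) := by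
    field_simp
    ring
  rw [key]
  have hT1 : 0 ≤ (M-2)/(2*M^2*(M+1)*(M+2)) + 1/(3*M^3) - 2/M^4 := by
    have e1 : 0 ≤ (M-2)/(2*M^2*(M+1)*(M+2)) :=
      div_nonneg (by linarith) (by positivity)
    have e2 : 2/M^4 ≤ 1/(3*M^3) := by
      rw [div_le_div_iff₀ (by positivity) (by positivity)]
      nlinarith [mul_le_mul_of_nonneg_right hM (pow_pos hM0 3).le, pow_pos hM0 3]
    linarith
  have hx3 : x^3 ≤ x^2 := by
    nlinarith [mul_nonneg (sq_nonneg x) (by linarith : (0:ℝ) ≤ 1 - x)]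
  have hx4 : x^4 ≤ x^2 := by
    nlinarith [mul_nonneg (mul_nonneg (sq_nonneg x) (by linarith : (0:ℝ) ≤ 1 - x))
      (by linarith : (0:ℝ) ≤ 1 + x)]
  have hT2 : 1/(3*(M+1)^3) + 2/(M+1)^4 ≤ 1/(2*(M+1)^2*(M+2)) := by
    rw [div_add_div _ _ (by positivity) (by positivity),
      div_le_div_iff₀ (by positivity) (by positivity)]
    have base : 2*(M+7)*(M+2) ≤ 3*(M+1)^2 := by nlinarith
    nlinarith [mul_le_mul_of_nonneg_right base (by positivity : (0:ℝ) ≤ (M+1)^5)]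
  have hh : x^3 * (1/(3*(M+1)^3)) + x^4 * (2/(M+1)^4) ≤ x^2 * (1/(2*(M+1)^2*(M+2))) := by
    have l1 : x^3 * (1/(3*(M+1)^3)) ≤ x^2 * (1/(3*(M+1)^3)) :=
      mul_le_mul_of_nonneg_right hx3 (by positivity)
    have l2 : x^4 * (2/(M+1)^4) ≤ x^2 * (2/(M+1)^4) :=
      mul_le_mul_of_nonneg_right hx4 (by positivity)
    have l3 := mul_le_mul_of_nonneg_left hT2 (sq_nonneg x)
    rw [mul_add] at l3
    linarith
  have := mul_nonneg hx.le hT1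
  linarith

lemma step_up (M x : ℝ) (hM : (64:ℝ) ≤ M) (hx : 0 < x) (hx1 : x ≤ 1) :
    x*(1/M - 1/(2*M^2) + 1/(3*M^3) + 2/M^4)
      - (x/(M+1) - x^2/(2*(M+1)^2) + x^3/(3*(M+1)^3) - 2*x^4/(M+1)^4)
    ≤ (x+x^2)/2 * (1/M - 1/(M+1)) := by
  have hM0 : (0:ℝ) < M := by linarith
  have h1 : (0:ℝ) < M+1 := by linarith
  rw [div_mul_eq_mul_div, ← sub_nonneg]
  have key : (x+x^2) * (1/M - 1/(M+1)) / 2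
      - (x*(1/M - 1/(2*M^2) + 1/(3*M^3) + 2/M^4)
        - (x/(M+1) - x^2/(2*(M+1)^2) + x^3/(3*(M+1)^3) - 2*x^4/(M+1)^4))
      = x * (1/(2*M^2*(M+1)) - 1/(3*M^3) - 2/M^4)
        + (x^2 * (1/(2*M*(M+1)^2)) - x^4 * (2/(M+1)^4)) + x^3 * (1/(3*(M+1)^3)) := by
    field_simp
    ring
  rw [key]
  have hU1 : 0 ≤ 1/(2*M^2*(M+1)) - 1/(3*M^3) - 2/M^4 := by
    have e2 : 1/(3*M^3) + 2/M^4 ≤ 1/(2*M^2*(M+1)) := by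
      rw [div_add_div _ _ (by positivity) (by positivity),
        div_le_div_iff₀ (by positivity) (by positivity)]
      have base : 2*(M+6)*(M+1) ≤ 3*M^2 := by nlinarith
      nlinarith [mul_le_mul_of_nonneg_right base (by positivity : (0:ℝ) ≤ M^5)]
    linarith
  have hx4 : x^4 ≤ x^2 := by
    nlinarith [mul_nonneg (mul_nonneg (sq_nonneg x) (by linarith : (0:ℝ) ≤ 1 - x))
      (by linarith : (0:ℝ) ≤ 1 + x)]
  have hU2 : 2/(M+1)^4 ≤ 1/(2*M*(M+1)^2) := by
    rw [div_le_div_iff₀ (by positivity) (by positivity)]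
    have base : 4*M ≤ (M+1)^2 := by nlinarith
    nlinarith [mul_le_mul_of_nonneg_right base (by positivity : (0:ℝ) ≤ (M+1)^2)]
  have hh : x^4 * (2/(M+1)^4) ≤ x^2 * (1/(2*M*(M+1)^2)) := by
    calc x^4 * (2/(M+1)^4) ≤ x^2 * (2/(M+1)^4) :=
          mul_le_mul_of_nonneg_right hx4 (by positivity)
      _ ≤ x^2 * (1/(2*M*(M+1)^2)) := mul_le_mul_of_nonneg_left hU2 (sq_nonneg x)
  have p1 := mul_nonneg hx.le hU1
  have p2 : 0 ≤ x^3 * (1/(3*(M+1)^3)) := by positivity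
  linarith


lemma GammaSeq_pos (x : ℝ) (hx : 0 < x) (m : ℕ) (hm : 1 ≤ m) : 0 < Real.GammaSeq x m := by
  rw [Real.GammaSeq]
  apply div_pos
  · apply mul_pos
    · exact Real.rpow_pos_of_pos (by exact_mod_cast Nat.pos_of_ne_zero (by omega)) x
    · exact_mod_cast Nat.factorial_pos m
  · exact Finset.prod_pos fun j _ => by positivity

lemma GammaSeq_ratio (x : ℝ) (hx : 0 < x) (m : ℕ) (hm : 1 ≤ m) :
    Real.GammaSeq x (m+1) = Real.GammaSeq x m *
      ((1 + 1/(m:ℝ))^x * (1 + x/((m:ℝ)+1))⁻¹) := by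
  have hm0 : (0:ℝ) < m := by exact_mod_cast hm
  have hrp : ((m:ℝ)+1)^x = (m:ℝ)^x * (1+1/(m:ℝ))^x := by
    rw [← Real.mul_rpow hm0.le (by positivity)]
    congr 1
    field_simp
  have hPne : (0:ℝ) < ∏ j ∈ Finset.range (m+1), (x + j) :=
    Finset.prod_pos fun j _ => by positivity
  rw [Real.GammaSeq, Real.GammaSeq, Finset.prod_range_succ]
  rw [Nat.factorial_succ]
  push_cast
  rw [hrp]
  have h1 : (0:ℝ) < (m:ℝ) + 1 := by linarith
  have h2 : (0:ℝ) < x + ((m:ℝ) + 1) := by linarith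
  have h3 : (0:ℝ) < (m:ℝ)^x := Real.rpow_pos_of_pos hm0 x
  have h4 : (0:ℝ) < (1+1/(m:ℝ))^x := Real.rpow_pos_of_pos (by positivity) x
  field_simp
  ring

lemma log_GammaSeq_succ (x : ℝ) (hx : 0 < x) (m : ℕ) (hm : 1 ≤ m) :
    Real.log (Real.GammaSeq x (m+1)) = Real.log (Real.GammaSeq x m)
      + (x * Real.log (1 + 1/(m:ℝ)) - Real.log (1 + x/((m:ℝ)+1))) := by
  have hm0 : (0:ℝ) < m := by exact_mod_cast hm
  have hG := GammaSeq_pos x hx m hm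
  have h4 : (0:ℝ) < (1+1/(m:ℝ))^x := Real.rpow_pos_of_pos (by positivity) x
  have h5 : (0:ℝ) < (1 + x/((m:ℝ)+1)) := by positivity
  rw [GammaSeq_ratio x hx m hm, Real.log_mul hG.ne' (by positivity), Real.log_mul h4.ne'
    (by positivity), Real.log_rpow (by positivity), Real.log_inv]
  ring



lemma dstep_low (x : ℝ) (hx : 0 < x) (hx1 : x ≤ 1) (m : ℕ) (hm : 64 ≤ m) :
    (x+x^2)/2 * (1/((m:ℝ)+1) - 1/((m:ℝ)+2))
      ≤ x * Real.log (1 + 1/(m:ℝ)) - Real.log (1 + x/((m:ℝ)+1)) := by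
  have hM' : (64:ℝ) ≤ (m:ℝ) := by exact_mod_cast hm
  set M := (m:ℝ) with hMdef
  have hM : (64:ℝ) ≤ M := hM'
  have hM0 : (0:ℝ) < M := by linarith
  have hM1 : (0:ℝ) < M + 1 := by linarith
  have t1 := (log_taylor (u := 1/M) (by positivity) (by rw [div_le_iff₀ hM0]; linarith)).1
  have t2 := (log_taylor (u := x/(M+1)) (by positivity)
    (by rw [div_le_iff₀ hM1]; nlinarith)).2
  have e1 : x * (1/M - 1/(2*M^2) + 1/(3*M^3) - 2/M^4) ≤ x * Real.log (1 + 1/M) := by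
    apply mul_le_mul_of_nonneg_left _ hx.le
    have heq : 1/M - (1/M)^2/2 + (1/M)^3/3 - 2*(1/M)^4
        = 1/M - 1/(2*M^2) + 1/(3*M^3) - 2/M^4 := by
      field_simp
    linarith [t1, heq]
  have e2 : Real.log (1 + x/(M+1))
      ≤ x/(M+1) - x^2/(2*(M+1)^2) + x^3/(3*(M+1)^3) + 2*x^4/(M+1)^4 := by
    have hM1' : M + 1 ≠ 0 := ne_of_gt hM1
    have heq : x/(M+1) - (x/(M+1))^2/2 + (x/(M+1))^3/3 + 2*(x/(M+1))^4
        = x/(M+1) - x^2/(2*(M+1)^2) + x^3/(3*(M+1)^3) + 2*x^4/(M+1)^4 := by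
      field_simp
    linarith [t2, heq]
  linarith [step_low M x hM hx hx1]

lemma dstep_up (x : ℝ) (hx : 0 < x) (hx1 : x ≤ 1) (m : ℕ) (hm : 64 ≤ m) :
    x * Real.log (1 + 1/(m:ℝ)) - Real.log (1 + x/((m:ℝ)+1))
      ≤ (x+x^2)/2 * (1/(m:ℝ) - 1/((m:ℝ)+1)) := by
  have hM' : (64:ℝ) ≤ (m:ℝ) := by exact_mod_cast hm
  set M := (m:ℝ) with hMdef
  have hM : (64:ℝ) ≤ M := hM'
  have hM0 : (0:ℝ) < M := by linarith
  have hM1 : (0:ℝ) < M + 1 := by linarith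
  have t1 := (log_taylor (u := 1/M) (by positivity) (by rw [div_le_iff₀ hM0]; linarith)).2
  have t2 := (log_taylor (u := x/(M+1)) (by positivity)
    (by rw [div_le_iff₀ hM1]; nlinarith)).1
  have e1 : x * Real.log (1 + 1/M) ≤ x * (1/M - 1/(2*M^2) + 1/(3*M^3) + 2/M^4) := by
    apply mul_le_mul_of_nonneg_left _ hx.le
    have heq : 1/M - (1/M)^2/2 + (1/M)^3/3 + 2*(1/M)^4
        = 1/M - 1/(2*M^2) + 1/(3*M^3) + 2/M^4 := by
      field_simp
    linarith [t1, heq]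
  have e2 : x/(M+1) - x^2/(2*(M+1)^2) + x^3/(3*(M+1)^3) - 2*x^4/(M+1)^4
      ≤ Real.log (1 + x/(M+1)) := by
    have hM1' : M + 1 ≠ 0 := ne_of_gt hM1
    have heq : x/(M+1) - (x/(M+1))^2/2 + (x/(M+1))^3/3 - 2*(x/(M+1))^4
        = x/(M+1) - x^2/(2*(M+1)^2) + x^3/(3*(M+1)^3) - 2*x^4/(M+1)^4 := by
      field_simp
    linarith [t2, heq]
  linarith [step_up M x hM hx hx1]

lemma tele_low (x : ℝ) (hx : 0 < x) (hx1 : x ≤ 1) :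
    ∀ m : ℕ, 64 ≤ m → Real.log (Real.GammaSeq x 64)
      + (x+x^2)/2 * (1/65 - 1/((m:ℝ)+1)) ≤ Real.log (Real.GammaSeq x m) := by
  intro m hm
  induction m, hm using Nat.le_induction with
  | base => norm_num
  | succ n hn ih =>
    have hd := dstep_low x hx hx1 n hn
    rw [log_GammaSeq_succ x hx n (by omega)]
    push_cast
    have hcast : ((n:ℝ)+1)+1 = (n:ℝ)+2 := by ring
    rw [hcast]
    linarith

lemma tele_up (x : ℝ) (hx : 0 < x) (hx1 : x ≤ 1) :
    ∀ m : ℕ, 64 ≤ m → Real.log (Real.GammaSeq x m) ≤ Real.log (Real.GammaSeq x 64)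
      + (x+x^2)/2 * (1/64 - 1/(m:ℝ)) := by
  intro m hm
  induction m, hm using Nat.le_induction with
  | base => norm_num
  | succ n hn ih =>
    have hd := dstep_up x hx hx1 n hn
    rw [log_GammaSeq_succ x hx n (by omega)]
    push_cast
    linarith

lemma gamma_sandwich (x : ℝ) (hx : 0 < x) (hx1 : x ≤ 1) :
    Real.GammaSeq x 64 * Real.exp ((x+x^2)/130) ≤ Real.Gamma x ∧
    Real.Gamma x ≤ Real.GammaSeq x 64 * Real.exp ((x+x^2)/128) := by
  have hG64 := GammaSeq_pos x hx 64 (by norm_num)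
  have hΓ := Real.Gamma_pos_of_pos hx
  have hlim : Tendsto (fun m : ℕ => Real.log (Real.GammaSeq x m)) atTop
      (𝓝 (Real.log (Real.Gamma x))) :=
    (Real.GammaSeq_tendsto_Gamma x).log hΓ.ne'
  constructor
  · have ht : Tendsto (fun m : ℕ => Real.log (Real.GammaSeq x 64)
        + (x+x^2)/2 * (1/65 - 1/((m:ℝ)+1))) atTop
        (𝓝 (Real.log (Real.GammaSeq x 64) + (x+x^2)/2 * (1/65 - 0))) :=
      tendsto_const_nhds.add (tendsto_const_nhds.mul
        (tendsto_const_nhds.sub tendsto_one_div_add_atTop_nhds_zero_nat))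
    have hle := le_of_tendsto_of_tendsto ht hlim
      (eventually_atTop.mpr ⟨64, fun m hm => tele_low x hx hx1 m hm⟩)
    have h1 : Real.log (Real.GammaSeq x 64) + (x+x^2)/130 ≤ Real.log (Real.Gamma x) := by
      have : (x+x^2)/2 * (1/65 - 0) = (x+x^2)/130 := by ring
      linarith [this ▸ hle]
    have h2 := Real.exp_le_exp.mpr h1
    rwa [Real.exp_add, Real.exp_log hG64, Real.exp_log hΓ] at h2
  · have hub : ∀ᶠ (m:ℕ) in atTop, Real.log (Real.GammaSeq x m)
        ≤ Real.log (Real.GammaSeq x 64) + (x+x^2)/128 := by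
      refine eventually_atTop.mpr ⟨64, fun m hm => ?_⟩
      have h5 := tele_up x hx hx1 m hm
      have h0 : (0:ℝ) < (m:ℝ) := by
        have : (64:ℝ) ≤ (m:ℝ) := by exact_mod_cast hm
        linarith
      have h3 : (x+x^2)/2 * (1/64 - 1/(m:ℝ)) ≤ (x+x^2)/128 := by
        have hp : (0:ℝ) ≤ x + x^2 := by positivity
        have h6 : (0:ℝ) < 1/(m:ℝ) := by positivity
        nlinarith
      linarith
    have hle := le_of_tendsto hlim hub
    have h2 := Real.exp_le_exp.mpr hle
    rwa [Real.exp_add, Real.exp_log hG64, Real.exp_log hΓ] at h2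


lemma gamma_conv_left {t q r A B : ℝ} (ht : 0 < t) (htq : t ≤ q) (hqr : q < r)
    (hA : A ≤ Real.Gamma q) (hB : Real.Gamma r ≤ B) :
    A - (B - A)/(r-q)*(q-t) ≤ Real.Gamma t := by
  have hrq : (0:ℝ) < r - q := by linarith
  rcases eq_or_lt_of_le htq with h|h
  · subst h
    simp only [sub_self, mul_zero, sub_zero]
    exact hA
  · have hq : q ∈ Set.Ioi (0:ℝ) := by simp; linarith
    have hr : r ∈ Set.Ioi (0:ℝ) := by simp; linarith
    have hts : t ∈ Set.Ioi (0:ℝ) := by simpa using ht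
    have hs := Real.convexOn_Gamma.slope_mono_adjacent hts hr h hqr
    have hqt : (0:ℝ) < q - t := by linarith
    rw [div_le_div_iff₀ hqt hrq] at hs
    have hkey : (B - A)/(r-q)*(q-t)*(r-q) = (B-A)*(q-t) := by field_simp
    nlinarith [mul_le_mul_of_nonneg_right hA hrq.le, mul_le_mul_of_nonneg_right hB hqt.le]

lemma gamma_conv_right {t q r A B : ℝ} (hr : 0 < r) (hrq : r < q) (hqt : q ≤ t)
    (hA : A ≤ Real.Gamma q) (hB : Real.Gamma r ≤ B) :
    A + (A - B)/(q-r)*(t-q) ≤ Real.Gamma t := by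
  have hqr : (0:ℝ) < q - r := by linarith
  rcases eq_or_lt_of_le hqt with h|h
  · subst h
    simp only [sub_self, mul_zero, add_zero]
    exact hA
  · have hq : q ∈ Set.Ioi (0:ℝ) := by simp; linarith
    have hrs : r ∈ Set.Ioi (0:ℝ) := by simpa using hr
    have hts : t ∈ Set.Ioi (0:ℝ) := by simp; linarith
    have hs := Real.convexOn_Gamma.slope_mono_adjacent hrs hts hrq h
    have htq : (0:ℝ) < t - q := by linarith
    rw [div_le_div_iff₀ hqr htq] at hs
    have hkey : (A - B)/(q-r)*(t-q)*(q-r) = (A-B)*(t-q) := by field_simp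
    nlinarith [mul_le_mul_of_nonneg_right hA hqr.le, mul_le_mul_of_nonneg_right hB htq.le]


-- ## rpow bounds
lemma rpow64_lb (p : ℕ) {r : ℝ} (hr : 0 ≤ r) (h : r^(64:ℕ) ≤ (64:ℝ)^p) :
    r ≤ (64:ℝ)^(((p:ℝ))/64) := by
  have e : ((p:ℝ)/64) * ((64:ℕ):ℝ) = (p:ℝ) := by
    push_cast
    field_simp
  have key : ((64:ℝ)^(((p:ℝ))/64))^(64:ℕ) = (64:ℝ)^p := by
    rw [← Real.rpow_natCast ((64:ℝ)^(((p:ℝ))/64)) 64, ← Real.rpow_mul (by norm_num : (0:ℝ) ≤ 64),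
      e, Real.rpow_natCast]
  exact le_of_pow_le_pow_left₀ (n := 64) (by norm_num) (by positivity) (by rw [key]; exact h)

lemma rpow64_ub (p : ℕ) {R : ℝ} (hR : 0 ≤ R) (h : (64:ℝ)^p ≤ R^(64:ℕ)) :
    (64:ℝ)^(((p:ℝ))/64) ≤ R := by
  have e : ((p:ℝ)/64) * ((64:ℕ):ℝ) = (p:ℝ) := by
    push_cast
    field_simp
  have key : ((64:ℝ)^(((p:ℝ))/64))^(64:ℕ) = (64:ℝ)^p := by
    rw [← Real.rpow_natCast ((64:ℝ)^(((p:ℝ))/64)) 64, ← Real.rpow_mul (by norm_num : (0:ℝ) ≤ 64),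
      e, Real.rpow_natCast]
  exact le_of_pow_le_pow_left₀ (n := 64) (by norm_num) hR (by rw [← key] at h; exact h)

lemma exp_ub {c : ℝ} (h0 : 0 ≤ c) (h1 : c < 1) : Real.exp c ≤ 1/(1-c) := by
  have h := Real.add_one_le_exp (-c)
  rw [Real.exp_neg] at h
  have hpos : (0:ℝ) < 1 - c := by linarith
  have he : (0:ℝ) < Real.exp c := Real.exp_pos c
  have hinv : (Real.exp c)⁻¹ * Real.exp c = 1 := inv_mul_cancel₀ (Real.exp_ne_zero c)
  rw [le_div_iff₀ hpos]
  nlinarith [mul_le_mul_of_nonneg_right h he.le]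


lemma val28 : (28/64:ℝ) * Real.GammaSeq (28/64) 64
    = (64:ℝ)^((28/64:ℝ)) * (1067993517960455041197510853084776057301352261178326384973520803911109862890320275011481043468288/7473660544039817972288287054471870234761904156678160058030932972057001248182898186495526645639075 : ℝ) := by
  rw [Real.GammaSeq]
  have h64 : ((64:ℕ):ℝ) = (64:ℝ) := by norm_num
  rw [h64]
  norm_num [Finset.prod_range_succ, Nat.factorial]
  ring


lemma gA28 : (32225936088995191014074400320566052031837347299017206712649977087084108486757628318180583858487246304074268672/36380663553517293975360568994809849261334957211321319071664181268713138185579565489176957346498966217041015625 : ℝ) ≤ Real.Gamma (1 + 28/64) := by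
  have hx : (0:ℝ) < 28/64 := by norm_num
  have hs := (gamma_sandwich (28/64) hx (by norm_num)).1
  have hG : (0:ℝ) < Real.GammaSeq (28/64) 64 := GammaSeq_pos _ hx 64 (by norm_num)
  have hrp : ((30844216508158816472245837/5000000000000000000000000 : ℝ)) ≤ (64:ℝ)^((28/64:ℝ)) := by
    have h := rpow64_lb 28 (r := (30844216508158816472245837/5000000000000000000000000 : ℝ)) (by norm_num) (by norm_num)
    push_cast at h
    exact h
  have hexp : (1:ℝ) + (28/64 + (28/64)^2)/130 ≤ Real.exp ((28/64 + (28/64:ℝ)^2)/130) := by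
    have := Real.add_one_le_exp (((28/64:ℝ) + (28/64)^2)/130)
    linarith
  have hΓ : Real.Gamma (1 + 28/64) = (28/64:ℝ) * Real.Gamma (28/64) := by
    rw [show (1:ℝ) + 28/64 = 28/64 + 1 by ring, Real.Gamma_add_one hx.ne']
  rw [hΓ]
  calc (32225936088995191014074400320566052031837347299017206712649977087084108486757628318180583858487246304074268672/36380663553517293975360568994809849261334957211321319071664181268713138185579565489176957346498966217041015625 : ℝ) = (30844216508158816472245837/5000000000000000000000000 : ℝ) * ((1067993517960455041197510853084776057301352261178326384973520803911109862890320275011481043468288/7473660544039817972288287054471870234761904156678160058030932972057001248182898186495526645639075 : ℝ) * ((1:ℝ) + (28/64 + (28/64)^2)/130)) := by norm_num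
    _ ≤ (64:ℝ)^((28/64:ℝ)) * ((1067993517960455041197510853084776057301352261178326384973520803911109862890320275011481043468288/7473660544039817972288287054471870234761904156678160058030932972057001248182898186495526645639075 : ℝ) * ((1:ℝ) + (28/64 + (28/64)^2)/130)) := by
        apply mul_le_mul_of_nonneg_right hrp
        positivity
    _ ≤ (64:ℝ)^((28/64:ℝ)) * ((1067993517960455041197510853084776057301352261178326384973520803911109862890320275011481043468288/7473660544039817972288287054471870234761904156678160058030932972057001248182898186495526645639075 : ℝ) * Real.exp (((28/64:ℝ) + (28/64)^2)/130)) := by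
        apply mul_le_mul_of_nonneg_left _ (by positivity)
        apply mul_le_mul_of_nonneg_left _ (by norm_num)
        exact hexp
    _ = ((28/64:ℝ) * Real.GammaSeq (28/64) 64) * Real.exp (((28/64:ℝ) + (28/64)^2)/130) := by
        rw [val28]; ring
    _ ≤ (28/64:ℝ) * Real.Gamma (28/64) := by
        rw [mul_assoc]
        exact mul_le_mul_of_nonneg_left hs (by norm_num)


lemma gB28 : Real.Gamma (1 + 28/64) ≤ (285949855011132611421874872437984540669761726298919804306845651638106953105251105994586504777945543346570756207149056/322783853424266106052404212932009528404979452605783628109050633403808063532908441182056582416896447241306304931640625 : ℝ) := by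
  have hx : (0:ℝ) < 28/64 := by norm_num
  have hs := (gamma_sandwich (28/64) hx (by norm_num)).2
  have hG : (0:ℝ) < Real.GammaSeq (28/64) 64 := GammaSeq_pos _ hx 64 (by norm_num)
  have hrp : (64:ℝ)^((28/64:ℝ)) ≤ (2467537320652705317779667/400000000000000000000000 : ℝ) := by
    have h := rpow64_ub 28 (R := (2467537320652705317779667/400000000000000000000000 : ℝ)) (by norm_num) (by norm_num)
    push_cast at h
    exact h
  have hexp : Real.exp (((28/64:ℝ) + (28/64)^2)/128) ≤ 1/(1 - ((28/64:ℝ) + (28/64)^2)/128) :=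
    exp_ub (by norm_num) (by norm_num)
  have hΓ : Real.Gamma (1 + 28/64) = (28/64:ℝ) * Real.Gamma (28/64) := by
    rw [show (1:ℝ) + 28/64 = 28/64 + 1 by ring, Real.Gamma_add_one hx.ne']
  rw [hΓ]
  calc (28/64:ℝ) * Real.Gamma (28/64)
      ≤ (28/64:ℝ) * (Real.GammaSeq (28/64) 64 * Real.exp (((28/64:ℝ) + (28/64)^2)/128)) :=
        mul_le_mul_of_nonneg_left hs (by norm_num)
    _ = ((28/64:ℝ) * Real.GammaSeq (28/64) 64) * Real.exp (((28/64:ℝ) + (28/64)^2)/128) := by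
        ring
    _ = (64:ℝ)^((28/64:ℝ)) * ((1067993517960455041197510853084776057301352261178326384973520803911109862890320275011481043468288/7473660544039817972288287054471870234761904156678160058030932972057001248182898186495526645639075 : ℝ) * Real.exp (((28/64:ℝ) + (28/64)^2)/128)) := by
        rw [val28]; ring
    _ ≤ (2467537320652705317779667/400000000000000000000000 : ℝ) * ((1067993517960455041197510853084776057301352261178326384973520803911109862890320275011481043468288/7473660544039817972288287054471870234761904156678160058030932972057001248182898186495526645639075 : ℝ) * (1/(1 - ((28/64:ℝ) + (28/64)^2)/128))) := by
        apply mul_le_mul hrp _ (by positivity) (by norm_num)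
        apply mul_le_mul_of_nonneg_left hexp (by norm_num)
    _ ≤ (285949855011132611421874872437984540669761726298919804306845651638106953105251105994586504777945543346570756207149056/322783853424266106052404212932009528404979452605783628109050633403808063532908441182056582416896447241306304931640625 : ℝ) := by norm_num


lemma val29 : (29/64:ℝ) * Real.GammaSeq (29/64) 64
    = (64:ℝ)^((29/64:ℝ)) * (363419362147803445274661903944002267176820680343659030140745099590319644056698961663095525356881782780381260803133088966767300814307328/2715200926441068953416963270379886278501158116104255444619220169928251650434465709275087005787696858849474480103104178690453859030323875 : ℝ) := by
  rw [Real.GammaSeq]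
  have h64 : ((64:ℕ):ℝ) = (64:ℝ) := by norm_num
  rw [h64]
  norm_num [Finset.prod_range_succ, Nat.factorial]
  ring


lemma gA29 : (304438474577192691183987933266885881911198884779240220672026930085581621607134559631963637565026669490605117482311027883748213896389050987942793439084544/343774775700377253091613086560763190974159329441592202272776121885434391604218356560415410092064554833929213836110829556844399717452190816402435302734375 : ℝ) ≤ Real.Gamma (1 + 29/64) := by
  have hx : (0:ℝ) < 29/64 := by norm_num
  have hs := (gamma_sandwich (29/64) hx (by norm_num)).1
  have hG : (0:ℝ) < Real.GammaSeq (29/64) 64 := GammaSeq_pos _ hx 64 (by norm_num)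
  have hrp : ((16457554781539648445187567/2500000000000000000000000 : ℝ)) ≤ (64:ℝ)^((29/64:ℝ)) := by
    have h := rpow64_lb 29 (r := (16457554781539648445187567/2500000000000000000000000 : ℝ)) (by norm_num) (by norm_num)
    push_cast at h
    exact h
  have hexp : (1:ℝ) + (29/64 + (29/64)^2)/130 ≤ Real.exp ((29/64 + (29/64:ℝ)^2)/130) := by
    have := Real.add_one_le_exp (((29/64:ℝ) + (29/64)^2)/130)
    linarith
  have hΓ : Real.Gamma (1 + 29/64) = (29/64:ℝ) * Real.Gamma (29/64) := by
    rw [show (1:ℝ) + 29/64 = 29/64 + 1 by ring, Real.Gamma_add_one hx.ne']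
  rw [hΓ]
  calc (304438474577192691183987933266885881911198884779240220672026930085581621607134559631963637565026669490605117482311027883748213896389050987942793439084544/343774775700377253091613086560763190974159329441592202272776121885434391604218356560415410092064554833929213836110829556844399717452190816402435302734375 : ℝ) = (16457554781539648445187567/2500000000000000000000000 : ℝ) * ((363419362147803445274661903944002267176820680343659030140745099590319644056698961663095525356881782780381260803133088966767300814307328/2715200926441068953416963270379886278501158116104255444619220169928251650434465709275087005787696858849474480103104178690453859030323875 : ℝ) * ((1:ℝ) + (29/64 + (29/64)^2)/130)) := by norm_num
    _ ≤ (64:ℝ)^((29/64:ℝ)) * ((363419362147803445274661903944002267176820680343659030140745099590319644056698961663095525356881782780381260803133088966767300814307328/2715200926441068953416963270379886278501158116104255444619220169928251650434465709275087005787696858849474480103104178690453859030323875 : ℝ) * ((1:ℝ) + (29/64 + (29/64)^2)/130)) := by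
        apply mul_le_mul_of_nonneg_right hrp
        positivity
    _ ≤ (64:ℝ)^((29/64:ℝ)) * ((363419362147803445274661903944002267176820680343659030140745099590319644056698961663095525356881782780381260803133088966767300814307328/2715200926441068953416963270379886278501158116104255444619220169928251650434465709275087005787696858849474480103104178690453859030323875 : ℝ) * Real.exp (((29/64:ℝ) + (29/64)^2)/130)) := by
        apply mul_le_mul_of_nonneg_left _ (by positivity)
        apply mul_le_mul_of_nonneg_left _ (by norm_num)
        exact hexp
    _ = ((29/64:ℝ) * Real.GammaSeq (29/64) 64) * Real.exp (((29/64:ℝ) + (29/64)^2)/130) := by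
        rw [val29]; ring
    _ ≤ (29/64:ℝ) * Real.Gamma (29/64) := by
        rw [mul_assoc]
        exact mul_le_mul_of_nonneg_left hs (by norm_num)


lemma gB29 : Real.Gamma (1 + 29/64) ≤ (373812128826229482072650214698444296786596161170652804622878862290364787669999814740343558959259656119460541877385436035942701953769240910782827206935459135488/422067751414574264431508567679141540494471062104980558638090988294198127568293632199317785035315332503365350828009310861627018089737194861508905887603759765625 : ℝ) := by
  have hx : (0:ℝ) < 29/64 := by norm_num
  have hs := (gamma_sandwich (29/64) hx (by norm_num)).2
  have hG : (0:ℝ) < Real.GammaSeq (29/64) 64 := GammaSeq_pos _ hx 64 (by norm_num)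
  have hrp : (64:ℝ)^((29/64:ℝ)) ≤ (65830219126158593780750269/10000000000000000000000000 : ℝ) := by
    have h := rpow64_ub 29 (R := (65830219126158593780750269/10000000000000000000000000 : ℝ)) (by norm_num) (by norm_num)
    push_cast at h
    exact h
  have hexp : Real.exp (((29/64:ℝ) + (29/64)^2)/128) ≤ 1/(1 - ((29/64:ℝ) + (29/64)^2)/128) :=
    exp_ub (by norm_num) (by norm_num)
  have hΓ : Real.Gamma (1 + 29/64) = (29/64:ℝ) * Real.Gamma (29/64) := by
    rw [show (1:ℝ) + 29/64 = 29/64 + 1 by ring, Real.Gamma_add_one hx.ne']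
  rw [hΓ]
  calc (29/64:ℝ) * Real.Gamma (29/64)
      ≤ (29/64:ℝ) * (Real.GammaSeq (29/64) 64 * Real.exp (((29/64:ℝ) + (29/64)^2)/128)) :=
        mul_le_mul_of_nonneg_left hs (by norm_num)
    _ = ((29/64:ℝ) * Real.GammaSeq (29/64) 64) * Real.exp (((29/64:ℝ) + (29/64)^2)/128) := by
        ring
    _ = (64:ℝ)^((29/64:ℝ)) * ((363419362147803445274661903944002267176820680343659030140745099590319644056698961663095525356881782780381260803133088966767300814307328/2715200926441068953416963270379886278501158116104255444619220169928251650434465709275087005787696858849474480103104178690453859030323875 : ℝ) * Real.exp (((29/64:ℝ) + (29/64)^2)/128)) := by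
        rw [val29]; ring
    _ ≤ (65830219126158593780750269/10000000000000000000000000 : ℝ) * ((363419362147803445274661903944002267176820680343659030140745099590319644056698961663095525356881782780381260803133088966767300814307328/2715200926441068953416963270379886278501158116104255444619220169928251650434465709275087005787696858849474480103104178690453859030323875 : ℝ) * (1/(1 - ((29/64:ℝ) + (29/64)^2)/128))) := by
        apply mul_le_mul hrp _ (by positivity) (by norm_num)
        apply mul_le_mul_of_nonneg_left hexp (by norm_num)
    _ ≤ (373812128826229482072650214698444296786596161170652804622878862290364787669999814740343558959259656119460541877385436035942701953769240910782827206935459135488/422067751414574264431508567679141540494471062104980558638090988294198127568293632199317785035315332503365350828009310861627018089737194861508905887603759765625 : ℝ) := by norm_num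


lemma val30 : (30/64:ℝ) * Real.GammaSeq (30/64) 64
    = (64:ℝ)^((30/64:ℝ)) * (19701003098197239606139520050071806902539869635232723333974146702122860885748605305707133127442457820403313995153408/157112100020593120500993113262276271770898683604267111345582198396619037125260132664860761212523288276488328027542435 : ℝ) := by
  rw [Real.GammaSeq]
  have h64 : ((64:ℕ):ℝ) = (64:ℝ) := by norm_num
  rw [h64]
  norm_num [Finset.prod_range_succ, Nat.factorial]
  ring


lemma gA30 : (46409126229287821819672063121689035588675329750232943827267788177803655912028702278313357713829579682466153133456137377729312980992/52406346040189511666996605079378065984455483226992486816733667041637737449991608729384807994403737185444450674979984760284423828125 : ℝ) ≤ Real.Gamma (1 + 30/64) := by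
  have hx : (0:ℝ) < 30/64 := by norm_num
  have hs := (gamma_sandwich (30/64) hx (by norm_num)).1
  have hG : (0:ℝ) < Real.GammaSeq (30/64) 64 := GammaSeq_pos _ hx 64 (by norm_num)
  have hrp : ((8781260801866497415560803/1250000000000000000000000 : ℝ)) ≤ (64:ℝ)^((30/64:ℝ)) := by
    have h := rpow64_lb 30 (r := (8781260801866497415560803/1250000000000000000000000 : ℝ)) (by norm_num) (by norm_num)
    push_cast at h
    exact h
  have hexp : (1:ℝ) + (30/64 + (30/64)^2)/130 ≤ Real.exp ((30/64 + (30/64:ℝ)^2)/130) := by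
    have := Real.add_one_le_exp (((30/64:ℝ) + (30/64)^2)/130)
    linarith
  have hΓ : Real.Gamma (1 + 30/64) = (30/64:ℝ) * Real.Gamma (30/64) := by
    rw [show (1:ℝ) + 30/64 = 30/64 + 1 by ring, Real.Gamma_add_one hx.ne']
  rw [hΓ]
  calc (46409126229287821819672063121689035588675329750232943827267788177803655912028702278313357713829579682466153133456137377729312980992/52406346040189511666996605079378065984455483226992486816733667041637737449991608729384807994403737185444450674979984760284423828125 : ℝ) = (8781260801866497415560803/1250000000000000000000000 : ℝ) * ((19701003098197239606139520050071806902539869635232723333974146702122860885748605305707133127442457820403313995153408/157112100020593120500993113262276271770898683604267111345582198396619037125260132664860761212523288276488328027542435 : ℝ) * ((1:ℝ) + (30/64 + (30/64)^2)/130)) := by norm_num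
    _ ≤ (64:ℝ)^((30/64:ℝ)) * ((19701003098197239606139520050071806902539869635232723333974146702122860885748605305707133127442457820403313995153408/157112100020593120500993113262276271770898683604267111345582198396619037125260132664860761212523288276488328027542435 : ℝ) * ((1:ℝ) + (30/64 + (30/64)^2)/130)) := by
        apply mul_le_mul_of_nonneg_right hrp
        positivity
    _ ≤ (64:ℝ)^((30/64:ℝ)) * ((19701003098197239606139520050071806902539869635232723333974146702122860885748605305707133127442457820403313995153408/157112100020593120500993113262276271770898683604267111345582198396619037125260132664860761212523288276488328027542435 : ℝ) * Real.exp (((30/64:ℝ) + (30/64)^2)/130)) := by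
        apply mul_le_mul_of_nonneg_left _ (by positivity)
        apply mul_le_mul_of_nonneg_left _ (by norm_num)
        exact hexp
    _ = ((30/64:ℝ) * Real.GammaSeq (30/64) 64) * Real.exp (((30/64:ℝ) + (30/64)^2)/130) := by
        rw [val30]; ring
    _ ≤ (30/64:ℝ) * Real.Gamma (30/64) := by
        rw [mul_assoc]
        exact mul_le_mul_of_nonneg_left hs (by norm_num)


lemma gB30 : Real.Gamma (1 + 30/64) ≤ (216249557829562302735426162168260401598424109803787077104765353754506003655217151776364238842521992079031768814277606361945532261598232576/244167246143635074381267657240190156959971769874542838392132693032885003243789526404379640304959100755941317796309287829935550689697265625 : ℝ) := by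
  have hx : (0:ℝ) < 30/64 := by norm_num
  have hs := (gamma_sandwich (30/64) hx (by norm_num)).2
  have hG : (0:ℝ) < Real.GammaSeq (30/64) 64 := GammaSeq_pos _ hx 64 (by norm_num)
  have hrp : (64:ℝ)^((30/64:ℝ)) ≤ (2810003456597279172979457/400000000000000000000000 : ℝ) := by
    have h := rpow64_ub 30 (R := (2810003456597279172979457/400000000000000000000000 : ℝ)) (by norm_num) (by norm_num)
    push_cast at h
    exact h
  have hexp : Real.exp (((30/64:ℝ) + (30/64)^2)/128) ≤ 1/(1 - ((30/64:ℝ) + (30/64)^2)/128) :=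
    exp_ub (by norm_num) (by norm_num)
  have hΓ : Real.Gamma (1 + 30/64) = (30/64:ℝ) * Real.Gamma (30/64) := by
    rw [show (1:ℝ) + 30/64 = 30/64 + 1 by ring, Real.Gamma_add_one hx.ne']
  rw [hΓ]
  calc (30/64:ℝ) * Real.Gamma (30/64)
      ≤ (30/64:ℝ) * (Real.GammaSeq (30/64) 64 * Real.exp (((30/64:ℝ) + (30/64)^2)/128)) :=
        mul_le_mul_of_nonneg_left hs (by norm_num)
    _ = ((30/64:ℝ) * Real.GammaSeq (30/64) 64) * Real.exp (((30/64:ℝ) + (30/64)^2)/128) := by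
        ring
    _ = (64:ℝ)^((30/64:ℝ)) * ((19701003098197239606139520050071806902539869635232723333974146702122860885748605305707133127442457820403313995153408/157112100020593120500993113262276271770898683604267111345582198396619037125260132664860761212523288276488328027542435 : ℝ) * Real.exp (((30/64:ℝ) + (30/64)^2)/128)) := by
        rw [val30]; ring
    _ ≤ (2810003456597279172979457/400000000000000000000000 : ℝ) * ((19701003098197239606139520050071806902539869635232723333974146702122860885748605305707133127442457820403313995153408/157112100020593120500993113262276271770898683604267111345582198396619037125260132664860761212523288276488328027542435 : ℝ) * (1/(1 - ((30/64:ℝ) + (30/64)^2)/128))) := by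
        apply mul_le_mul hrp _ (by positivity) (by norm_num)
        apply mul_le_mul_of_nonneg_left hexp (by norm_num)
    _ ≤ (216249557829562302735426162168260401598424109803787077104765353754506003655217151776364238842521992079031768814277606361945532261598232576/244167246143635074381267657240190156959971769874542838392132693032885003243789526404379640304959100755941317796309287829935550689697265625 : ℝ) := by norm_num


lemma val31 : (31/64:ℝ) * Real.GammaSeq (31/64) 64
    = (64:ℝ)^((31/64:ℝ)) * (363419362147803445274661903944002267176820680343659030140745099590319644056698961663095525356881782780381260803133088966767300814307328/3092832715738505856203507801683279372228069031592299946400999172033766767989059101425845660376798942481853645894309795767272482709920675 : ℝ) := by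
  rw [Real.GammaSeq]
  have h64 : ((64:ℕ):ℝ) = (64:ℝ) := by norm_num
  rw [h64]
  norm_num [Finset.prod_range_succ, Nat.factorial]
  ring


lemma gB31 : Real.Gamma (1 + 31/64) ≤ (425693003841514413196109659977728128203708577276153893077652160093910660163110804506650307772137978791579947877621126585282771039553337441104414890643807010816/480540599382299142655940463499118661211579499583668837236325773997783681191122543547944621478862014731859274301373109774201255426835469742573797702789306640625 : ℝ) := by
  have hx : (0:ℝ) < 31/64 := by norm_num
  have hs := (gamma_sandwich (31/64) hx (by norm_num)).2
  have hG : (0:ℝ) < Real.GammaSeq (31/64) 64 := GammaSeq_pos _ hx 64 (by norm_num)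
  have hrp : (64:ℝ)^((31/64:ℝ)) ≤ (37483352682205998026599979/5000000000000000000000000 : ℝ) := by
    have h := rpow64_ub 31 (R := (37483352682205998026599979/5000000000000000000000000 : ℝ)) (by norm_num) (by norm_num)
    push_cast at h
    exact h
  have hexp : Real.exp (((31/64:ℝ) + (31/64)^2)/128) ≤ 1/(1 - ((31/64:ℝ) + (31/64)^2)/128) :=
    exp_ub (by norm_num) (by norm_num)
  have hΓ : Real.Gamma (1 + 31/64) = (31/64:ℝ) * Real.Gamma (31/64) := by
    rw [show (1:ℝ) + 31/64 = 31/64 + 1 by ring, Real.Gamma_add_one hx.ne']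
  rw [hΓ]
  calc (31/64:ℝ) * Real.Gamma (31/64)
      ≤ (31/64:ℝ) * (Real.GammaSeq (31/64) 64 * Real.exp (((31/64:ℝ) + (31/64)^2)/128)) :=
        mul_le_mul_of_nonneg_left hs (by norm_num)
    _ = ((31/64:ℝ) * Real.GammaSeq (31/64) 64) * Real.exp (((31/64:ℝ) + (31/64)^2)/128) := by
        ring
    _ = (64:ℝ)^((31/64:ℝ)) * ((363419362147803445274661903944002267176820680343659030140745099590319644056698961663095525356881782780381260803133088966767300814307328/3092832715738505856203507801683279372228069031592299946400999172033766767989059101425845660376798942481853645894309795767272482709920675 : ℝ) * Real.exp (((31/64:ℝ) + (31/64)^2)/128)) := by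
        rw [val31]; ring
    _ ≤ (37483352682205998026599979/5000000000000000000000000 : ℝ) * ((363419362147803445274661903944002267176820680343659030140745099590319644056698961663095525356881782780381260803133088966767300814307328/3092832715738505856203507801683279372228069031592299946400999172033766767989059101425845660376798942481853645894309795767272482709920675 : ℝ) * (1/(1 - ((31/64:ℝ) + (31/64)^2)/128))) := by
        apply mul_le_mul hrp _ (by positivity) (by norm_num)
        apply mul_le_mul_of_nonneg_left hexp (by norm_num)
    _ ≤ (425693003841514413196109659977728128203708577276153893077652160093910660163110804506650307772137978791579947877621126585282771039553337441104414890643807010816/480540599382299142655940463499118661211579499583668837236325773997783681191122543547944621478862014731859274301373109774201255426835469742573797702789306640625 : ℝ) := by norm_num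


lemma val34 : (34/64:ℝ) * Real.GammaSeq (34/64) 64
    = (64:ℝ)^((34/64:ℝ)) * (19701003098197239606139520050071806902539869635232723333974146702122860885748605305707133127442457820403313995153408/203483962016375806618183401785499680053727153397671233160885397826165808636227012943946457293415488163691269563859875 : ℝ) := by
  rw [Real.GammaSeq]
  have h64 : ((64:ℕ):ℝ) = (64:ℝ) := by norm_num
  rw [h64]
  norm_num [Finset.prod_range_succ, Nat.factorial]
  ring


lemma gB34 : Real.Gamma (1 + 34/64) ≤ (7011024506729183427389211026089444013583185240055784180670069280962822990345785220981201520942309650010961638751935043086383169770318987264/7898076691940655910416122694355753907715490678357870499980614580953719839743843656422687367033106017992194669463499265946447849273681640625 : ℝ) := by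
  have hx : (0:ℝ) < 34/64 := by norm_num
  have hs := (gamma_sandwich (34/64) hx (by norm_num)).2
  have hG : (0:ℝ) < Real.GammaSeq (34/64) 64 := GammaSeq_pos _ hx 64 (by norm_num)
  have hrp : (64:ℝ)^((34/64:ℝ)) ≤ (91103090780535332296306423/10000000000000000000000000 : ℝ) := by
    have h := rpow64_ub 34 (R := (91103090780535332296306423/10000000000000000000000000 : ℝ)) (by norm_num) (by norm_num)
    push_cast at h
    exact h
  have hexp : Real.exp (((34/64:ℝ) + (34/64)^2)/128) ≤ 1/(1 - ((34/64:ℝ) + (34/64)^2)/128) :=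
    exp_ub (by norm_num) (by norm_num)
  have hΓ : Real.Gamma (1 + 34/64) = (34/64:ℝ) * Real.Gamma (34/64) := by
    rw [show (1:ℝ) + 34/64 = 34/64 + 1 by ring, Real.Gamma_add_one hx.ne']
  rw [hΓ]
  calc (34/64:ℝ) * Real.Gamma (34/64)
      ≤ (34/64:ℝ) * (Real.GammaSeq (34/64) 64 * Real.exp (((34/64:ℝ) + (34/64)^2)/128)) :=
        mul_le_mul_of_nonneg_left hs (by norm_num)
    _ = ((34/64:ℝ) * Real.GammaSeq (34/64) 64) * Real.exp (((34/64:ℝ) + (34/64)^2)/128) := by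
        ring
    _ = (64:ℝ)^((34/64:ℝ)) * ((19701003098197239606139520050071806902539869635232723333974146702122860885748605305707133127442457820403313995153408/203483962016375806618183401785499680053727153397671233160885397826165808636227012943946457293415488163691269563859875 : ℝ) * Real.exp (((34/64:ℝ) + (34/64)^2)/128)) := by
        rw [val34]; ring
    _ ≤ (91103090780535332296306423/10000000000000000000000000 : ℝ) * ((19701003098197239606139520050071806902539869635232723333974146702122860885748605305707133127442457820403313995153408/203483962016375806618183401785499680053727153397671233160885397826165808636227012943946457293415488163691269563859875 : ℝ) * (1/(1 - ((34/64:ℝ) + (34/64)^2)/128))) := by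
        apply mul_le_mul hrp _ (by positivity) (by norm_num)
        apply mul_le_mul_of_nonneg_left hexp (by norm_num)
    _ ≤ (7011024506729183427389211026089444013583185240055784180670069280962822990345785220981201520942309650010961638751935043086383169770318987264/7898076691940655910416122694355753907715490678357870499980614580953719839743843656422687367033106017992194669463499265946447849273681640625 : ℝ) := by norm_num


lemma val35 : (35/64:ℝ) * Real.GammaSeq (35/64) 64
    = (64:ℝ)^((35/64:ℝ)) * (363419362147803445274661903944002267176820680343659030140745099590319644056698961663095525356881782780381260803133088966767300814307328/4002115963687768888017732233426904645226552865621235225289835116677749711017714669698048821146615855551407949512425089229614761788109475 : ℝ) := by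
  rw [Real.GammaSeq]
  have h64 : ((64:ℕ):ℝ) = (64:ℝ) := by norm_num
  rw [h64]
  norm_num [Finset.prod_range_succ, Nat.factorial]
  ring


lemma gA35 : (625827192192338659591628063570842854159106148683905314079996280829734295903053216779939277867497212957374481955364713097168104782546078081857034911744/704310948160773261799186881479145915621782893150578593611688207188530158910353491666323953382405293117352289848935273244127423434121906757354736328125 : ℝ) ≤ Real.Gamma (1 + 35/64) := by
  have hx : (0:ℝ) < 35/64 := by norm_num
  have hs := (gamma_sandwich (35/64) hx (by norm_num)).1
  have hG : (0:ℝ) < Real.GammaSeq (35/64) 64 := GammaSeq_pos _ hx 64 (by norm_num)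
  have hrp : ((4860989439921875512466081/500000000000000000000000 : ℝ)) ≤ (64:ℝ)^((35/64:ℝ)) := by
    have h := rpow64_lb 35 (r := (4860989439921875512466081/500000000000000000000000 : ℝ)) (by norm_num) (by norm_num)
    push_cast at h
    exact h
  have hexp : (1:ℝ) + (35/64 + (35/64)^2)/130 ≤ Real.exp ((35/64 + (35/64:ℝ)^2)/130) := by
    have := Real.add_one_le_exp (((35/64:ℝ) + (35/64)^2)/130)
    linarith
  have hΓ : Real.Gamma (1 + 35/64) = (35/64:ℝ) * Real.Gamma (35/64) := by
    rw [show (1:ℝ) + 35/64 = 35/64 + 1 by ring, Real.Gamma_add_one hx.ne']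
  rw [hΓ]
  calc (625827192192338659591628063570842854159106148683905314079996280829734295903053216779939277867497212957374481955364713097168104782546078081857034911744/704310948160773261799186881479145915621782893150578593611688207188530158910353491666323953382405293117352289848935273244127423434121906757354736328125 : ℝ) = (4860989439921875512466081/500000000000000000000000 : ℝ) * ((363419362147803445274661903944002267176820680343659030140745099590319644056698961663095525356881782780381260803133088966767300814307328/4002115963687768888017732233426904645226552865621235225289835116677749711017714669698048821146615855551407949512425089229614761788109475 : ℝ) * ((1:ℝ) + (35/64 + (35/64)^2)/130)) := by norm_num
    _ ≤ (64:ℝ)^((35/64:ℝ)) * ((363419362147803445274661903944002267176820680343659030140745099590319644056698961663095525356881782780381260803133088966767300814307328/4002115963687768888017732233426904645226552865621235225289835116677749711017714669698048821146615855551407949512425089229614761788109475 : ℝ) * ((1:ℝ) + (35/64 + (35/64)^2)/130)) := by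
        apply mul_le_mul_of_nonneg_right hrp
        positivity
    _ ≤ (64:ℝ)^((35/64:ℝ)) * ((363419362147803445274661903944002267176820680343659030140745099590319644056698961663095525356881782780381260803133088966767300814307328/4002115963687768888017732233426904645226552865621235225289835116677749711017714669698048821146615855551407949512425089229614761788109475 : ℝ) * Real.exp (((35/64:ℝ) + (35/64)^2)/130)) := by
        apply mul_le_mul_of_nonneg_left _ (by positivity)
        apply mul_le_mul_of_nonneg_left _ (by norm_num)
        exact hexp
    _ = ((35/64:ℝ) * Real.GammaSeq (35/64) 64) * Real.exp (((35/64:ℝ) + (35/64)^2)/130) := by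
        rw [val35]; ring
    _ ≤ (35/64:ℝ) * Real.Gamma (35/64) := by
        rw [mul_assoc]
        exact mul_le_mul_of_nonneg_left hs (by norm_num)


theorem mul_gamma_ge (x : ℝ) (hx : 0 < x) : 0.885 ≤ x * Real.Gamma x := by
  have hΓ : x * Real.Gamma x = Real.Gamma (x+1) := (Real.Gamma_add_one hx.ne').symm
  rw [hΓ]
  rcases le_or_gt 1 x with h1|h1
  · have hmem2 : (2:ℝ) ∈ Set.Ici (2:ℝ) := by norm_num
    have hmemx : x + 1 ∈ Set.Ici (2:ℝ) := by simp; linarith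
    have hmono := Real.Gamma_strictMonoOn_Ici.monotoneOn hmem2 hmemx (by linarith)
    rw [Real.Gamma_two] at hmono
    linarith
  · have ht0 : (0:ℝ) < x + 1 := by linarith
    rcases le_or_gt x (28/64) with h2|h2
    · have hb := gamma_conv_left (t := x+1) (q := 1 + 28/64) (r := 1 + 29/64) ht0
        (by linarith) (by norm_num) gA28 gB29
      linarith
    · rcases le_or_gt x (29/64) with h3|h3
      · have hb := gamma_conv_left (t := x+1) (q := 1 + 29/64) (r := 1 + 30/64) ht0
          (by linarith) (by norm_num) gA29 gB30
        linarith
      · rcases le_or_gt x (30/64) with h4|h4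
        · have hb := gamma_conv_left (t := x+1) (q := 1 + 30/64) (r := 1 + 31/64) ht0
            (by linarith) (by norm_num) gA30 gB31
          linarith
        · rcases le_or_gt x (35/64) with h5|h5
          · have hb := gamma_conv_right (t := x+1) (q := 1 + 30/64) (r := 1 + 29/64)
              (by norm_num) (by norm_num) (by linarith) gA30 gB29
            linarith
          · have hb := gamma_conv_right (t := x+1) (q := 1 + 35/64) (r := 1 + 34/64)
              (by norm_num) (by norm_num) (by linarith) gA35 gB34
            linarith
end

section
/- Fix $t > 0$. There exists a finite constant $C_1$ (depending only on $t$) such that for all $x, y > 0$: if $x \leq y \log(3 + 1/y)^t$ then $x / \log(3 + 1/x)^t \leq C_1 y$. -/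
theorem log_inverse_first (t : ℝ) (ht : 0 < t) :
    ∃ C₁ : ℝ, ∀ x y : ℝ, 0 < x → 0 < y →
      x ≤ y * Real.log (3 + 1 / y) ^ t →
      x / Real.log (3 + 1 / x) ^ t ≤ C₁ * y := by
  have hlog : ∀ z : ℝ, 0 < z → 1 < Real.log (3 + 1 / z) := by
    intro z hz
    have h1 : 0 < 1 / z := by positivity
    rw [Real.lt_log_iff_exp_lt (by positivity)]
    have := Real.exp_one_lt_d9
    linarith
  have hpow : ∀ z : ℝ, 0 < z → 1 ≤ Real.log (3 + 1 / z) ^ t := by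
    intro z hz
    exact Real.one_le_rpow (hlog z hz).le ht.le
  set B : ℝ := 2 * (2 * t) ^ t with hB
  have h2t : (0:ℝ) < 2 * t := by linarith
  have h2tp : (0:ℝ) < (2 * t) ^ t := Real.rpow_pos_of_pos h2t t
  have hBpos : 0 < B := by positivity
  set U : ℝ := max 3 (B ^ (4:ℕ)) with hU
  have hU3 : (3:ℝ) ≤ U := le_max_left _ _
  have hUB : B ^ (4:ℕ) ≤ U := le_max_right _ _
  set M : ℝ := Real.log (3 + U) with hM
  have hMpos : 0 ≤ M := Real.log_nonneg (by linarith)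
  refine ⟨max (M ^ t) ((4:ℝ) ^ t), ?_⟩
  intro x y hx hy hxy
  have hLx1 := hlog x hx
  have hLxt := hpow x hx
  have hLxtpos : (0:ℝ) < Real.log (3 + 1 / x) ^ t := by linarith
  have hLy0 : (0:ℝ) ≤ Real.log (3 + 1 / y) := by
    have := hlog y hy; linarith
  have hLytpos : (0:ℝ) < Real.log (3 + 1 / y) ^ t := by
    have := hpow y hy; linarith
  have hxle : x / Real.log (3 + 1 / x) ^ t ≤ x := div_le_self hx.le hLxt
  rcases le_or_gt (1 / y) U with hcase | hcase
  · -- easy case: 1/y ≤ U, so log(3+1/y) ≤ M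
    have hLyM : Real.log (3 + 1 / y) ≤ M :=
      Real.log_le_log (by positivity) (by linarith)
    have : Real.log (3 + 1 / y) ^ t ≤ M ^ t :=
      Real.rpow_le_rpow hLy0 hLyM ht.le
    calc x / Real.log (3 + 1 / x) ^ t ≤ x := hxle
      _ ≤ y * Real.log (3 + 1 / y) ^ t := hxy
      _ ≤ y * M ^ t := by gcongr
      _ = M ^ t * y := by ring
      _ ≤ max (M ^ t) ((4:ℝ) ^ t) * y := by gcongr; exact le_max_left _ _
  · -- hard case: 1/y > U
    set u : ℝ := 1 / y with hu
    have hu3 : (3:ℝ) < u := lt_of_le_of_lt hU3 hcase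
    have hs : (0:ℝ) < 3 + u := by linarith
    -- Step 1: log(3+u) ≤ (3+u)^(1/(2t)) * (2t)
    have h1 : Real.log (3 + u) ≤ (3 + u) ^ (1 / (2 * t)) * (2 * t) := by
      have h := Real.log_le_rpow_div (x := 3 + u) (ε := 1 / (2 * t)) hs.le (by positivity)
      rwa [div_div_eq_mul_div, div_one] at h
    -- Step 2: log(3+u)^t ≤ (3+u)^(1/2) * (2t)^t
    have h2 : Real.log (3 + u) ^ t ≤ (3 + u) ^ (1/2 : ℝ) * (2 * t) ^ t := by
      have h := Real.rpow_le_rpow hLy0 h1 ht.le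
      rw [Real.mul_rpow (Real.rpow_nonneg hs.le _) h2t.le,
        ← Real.rpow_mul hs.le] at h
      rwa [show 1 / (2 * t) * t = (1/2 : ℝ) by field_simp] at h
    -- Step 3: B ≤ (3+u)^(1/4)
    have h3 : B ≤ (3 + u) ^ (1/4 : ℝ) := by
      have hBs : B ^ (4:ℕ) ≤ 3 + u := by linarith
      have := Real.rpow_le_rpow (by positivity) hBs (by norm_num : (0:ℝ) ≤ 1/4)
      rwa [← Real.rpow_natCast B 4, ← Real.rpow_mul hBpos.le,
        show ((4:ℕ):ℝ) * (1/4) = 1 by norm_num, Real.rpow_one] at this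
    -- Step 4: (3+u)^(1/4) ≤ u / log(3+u)^t
    have h4 : (3 + u) ^ (1/4 : ℝ) ≤ u / Real.log (3 + u) ^ t := by
      rw [le_div_iff₀ hLytpos]
      calc (3 + u) ^ (1/4 : ℝ) * Real.log (3 + u) ^ t
          ≤ (3 + u) ^ (1/4 : ℝ) * ((3 + u) ^ (1/2 : ℝ) * (2 * t) ^ t) := by
            gcongr
        _ = (3 + u) ^ (1/4 + 1/2 : ℝ) * (B / 2) := by
            rw [Real.rpow_add hs]; ring
        _ ≤ (3 + u) ^ (1/4 + 1/2 : ℝ) * ((3 + u) ^ (1/4 : ℝ) / 2) := by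
            gcongr
        _ = (3 + u) ^ (1/4 + 1/2 + 1/4 : ℝ) / 2 := by
            rw [Real.rpow_add hs (1/4 + 1/2) (1/4)]; ring
        _ = (3 + u) / 2 := by norm_num
        _ ≤ u := by linarith
    -- Step 5: (3+u)^(1/4) ≤ 1/x
    have h5 : (3 + u) ^ (1/4 : ℝ) ≤ 1 / x := by
      have hyl : (0:ℝ) < y * Real.log (3 + 1 / y) ^ t := by positivity
      have := one_div_le_one_div_of_le hx hxy
      calc (3 + u) ^ (1/4 : ℝ) ≤ u / Real.log (3 + u) ^ t := h4
        _ = 1 / (y * Real.log (3 + 1 / y) ^ t) := by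
            rw [hu, div_div]
        _ ≤ 1 / x := this
    -- Step 6: log(3+u) ≤ 4 * log(3+1/x)
    have h6 : Real.log (3 + u) ≤ 4 * Real.log (3 + 1 / x) := by
      have hmono : Real.log ((3 + u) ^ (1/4 : ℝ)) ≤ Real.log (3 + 1 / x) :=
        Real.log_le_log (by positivity) (by linarith)
      rw [Real.log_rpow hs] at hmono
      linarith
    -- Step 7: finish
    have h7 : Real.log (3 + 1 / y) ^ t ≤ (4:ℝ) ^ t * Real.log (3 + 1 / x) ^ t := by
      have := Real.rpow_le_rpow hLy0 h6 ht.le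
      rwa [Real.mul_rpow (by norm_num) (by linarith)] at this
    rw [div_le_iff₀ hLxtpos]
    calc x ≤ y * Real.log (3 + 1 / y) ^ t := hxy
      _ ≤ y * ((4:ℝ) ^ t * Real.log (3 + 1 / x) ^ t) := by gcongr
      _ = (4:ℝ) ^ t * y * Real.log (3 + 1 / x) ^ t := by ring
      _ ≤ max (M ^ t) ((4:ℝ) ^ t) * y * Real.log (3 + 1 / x) ^ t := by
          gcongr; exact le_max_right _ _
end

section
/- Let $\mu$ be a probability measure on $\mathbb{R}^d$ with finite $\gamma$-th absolute moment $M_\gamma(\mu) = \int \|x\|^\gamma\,d\mu(x)$ for some $\gamma \in (0,2)$. Then $\int_{X \sim \mu} \int_{\mathbb{R}^d} \frac{(\cos\langle \omega, X\rangle - 1)^2 + \sin^2\langle \omega, X\rangle}{\|\omega\|^{d+\gamma}}\,d\omega\,d\mu(X) \leq \frac{16 \pi^{d/2} M_\gamma(\mu)}{\Gamma(d/2)\,\gamma(2-\gamma)}$. -/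
open MeasureTheory Real Set Metric
open scoped RealInnerProductSpace ENNReal

lemma my_lintegral_norm_addHaar {E : Type*} [NormedAddCommGroup E] [NormedSpace ℝ E]
    [MeasurableSpace E] [BorelSpace E] [Nontrivial E] [FiniteDimensional ℝ E]
    (μ : Measure E) [μ.IsAddHaarMeasure] (f : ℝ → ℝ≥0∞) (hf : Measurable f) :
    ∫⁻ x, f ‖x‖ ∂μ = (Module.finrank ℝ E) * μ (Metric.ball 0 1) *
      ∫⁻ y in Set.Ioi (0:ℝ), ENNReal.ofReal (y ^ (Module.finrank ℝ E - 1)) * f y := by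
  have hmeas : Measurable (fun p : sphere (0:E) 1 × Ioi (0:ℝ) => f p.2) :=
    hf.comp (measurable_subtype_coe.comp measurable_snd)
  calc ∫⁻ x, f ‖x‖ ∂μ
      = ∫⁻ x : ({0}ᶜ : Set E), f ‖x.1‖ ∂(μ.comap (↑)) := by
        rw [lintegral_subtype_comap (measurableSet_singleton (0:E)).compl
          (fun x => f ‖x‖), MeasureTheory.restrict_compl_singleton]
    _ = ∫⁻ p : sphere (0:E) 1 × Ioi (0:ℝ), f p.2
          ∂(μ.toSphere.prod (.volumeIoiPow (Module.finrank ℝ E - 1))) :=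
        by simpa using μ.measurePreserving_homeomorphUnitSphereProd.lintegral_comp hmeas
    _ = μ.toSphere univ * ∫⁻ r : Ioi (0:ℝ), f r
          ∂(Measure.volumeIoiPow (Module.finrank ℝ E - 1)) := by
        rw [lintegral_prod _ hmeas.aemeasurable]
        simp [lintegral_const, mul_comm]
    _ = _ := by
        rw [Measure.toSphere_apply_univ]
        congr 1
        rw [Measure.volumeIoiPow,
          lintegral_withDensity_eq_lintegral_mul _
            (f := fun r : Ioi (0:ℝ) => ENNReal.ofReal (r.1 ^ (Module.finrank ℝ E - 1)))
            (by measurability) (g := fun r : Ioi (0:ℝ) => f r.1) (hf.comp measurable_subtype_coe),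
          ← lintegral_subtype_comap measurableSet_Ioi
            (fun y => ENNReal.ofReal (y ^ (Module.finrank ℝ E - 1)) * f y)]
        rfl


lemma oneDim_bound (γ : ℝ) (hγ0 : 0 < γ) (hγ2 : γ < 2) (a : ℝ) (ha : 0 ≤ a) :
    ∫⁻ y in Set.Ioi (0:ℝ),
        ENNReal.ofReal (4 * min ((a*y)^2) 1 * y ^ (-(1+γ))) ≤
      ENNReal.ofReal (8 * a ^ γ / (γ * (2 - γ))) := by
  rcases eq_or_lt_of_le ha with rfl | ha
  · have : ∀ y : ℝ, ENNReal.ofReal (4 * min (((0:ℝ)*y)^2) 1 * y ^ (-(1+γ))) = 0 := by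
      intro y
      have : min (((0:ℝ)*y)^2) 1 = 0 := by norm_num
      simp [this]
    simp only [this, lintegral_zero]
    exact bot_le
  · set c : ℝ := a⁻¹ with hc
    have hcpos : 0 < c := inv_pos.2 ha
    have hac : a * c = 1 := mul_inv_cancel₀ ha.ne'
    have hsplit : Set.Ioi (0:ℝ) = Set.Ioc 0 c ∪ Set.Ioi c := (Set.Ioc_union_Ioi_eq_Ioi hcpos.le).symm
    rw [hsplit, lintegral_union measurableSet_Ioi (Set.Ioc_disjoint_Ioi le_rfl)]
    have hcg : c ^ (2-γ) = a ^ (γ-2) := by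
      rw [hc, Real.inv_rpow ha.le, ← Real.rpow_neg ha.le]
      congr 1; ring
    have hcg2 : c ^ (-γ) = a ^ γ := by
      rw [hc, Real.inv_rpow ha.le, ← Real.rpow_neg ha.le, neg_neg]
    have h1 : ∫⁻ y in Set.Ioc 0 c, ENNReal.ofReal (4 * min ((a*y)^2) 1 * y ^ (-(1+γ))) ≤
        ENNReal.ofReal (4 * a ^ γ / (2 - γ)) := by
      have hle : ∀ y ∈ Set.Ioc (0:ℝ) c, ENNReal.ofReal (4 * min ((a*y)^2) 1 * y ^ (-(1+γ))) ≤
          ENNReal.ofReal (4 * a^2 * y ^ (1-γ)) := by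
        intro y hy
        apply ENNReal.ofReal_le_ofReal
        have hy0 : 0 < y := hy.1
        have hay : a * y ≤ 1 := by
          calc a * y ≤ a * c := by nlinarith [hy.2]
            _ = 1 := hac
        rw [min_eq_left (by nlinarith [mul_pos ha hy0] : (a*y)^2 ≤ 1)]
        have hkey : (a*y)^2 * y ^ (-(1+γ)) = a^2 * y^(1-γ) := by
          rw [mul_pow, mul_assoc]
          congr 1
          rw [← Real.rpow_natCast y 2, ← Real.rpow_add hy0]
          congr 1; push_cast; ring
        rw [mul_assoc, hkey, ← mul_assoc]
      calc _ ≤ ∫⁻ y in Set.Ioc 0 c, ENNReal.ofReal (4 * a^2 * y ^ (1-γ)) :=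
            setLIntegral_mono (by fun_prop) hle
        _ = ENNReal.ofReal (∫ y in Set.Ioc 0 c, 4 * a^2 * y ^ (1-γ)) := by
            rw [← ofReal_integral_eq_lintegral_ofReal]
            · exact (intervalIntegral.intervalIntegrable_rpow'
                (by linarith : (-1:ℝ) < 1-γ)).1.const_mul _
            · filter_upwards [ae_restrict_mem measurableSet_Ioc] with y hy
              have := Real.rpow_nonneg hy.1.le (1-γ)
              positivity
        _ ≤ ENNReal.ofReal (4 * a ^ γ / (2 - γ)) := by
            apply ENNReal.ofReal_le_ofReal
            rw [integral_const_mul, ← intervalIntegral.integral_of_le hcpos.le,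
              integral_rpow (Or.inl (by linarith)),
              Real.zero_rpow (by linarith : (1-γ+1) ≠ 0)]
            have h12 : (1:ℝ)-γ+1 = 2-γ := by ring
            have haa : a^(2:ℕ) * a^(γ-2) = a^γ := by
              rw [← Real.rpow_natCast a 2, ← Real.rpow_add ha]
              congr 1; push_cast; ring
            rw [h12, hcg, sub_zero,
              show 4 * a^(2:ℕ) * (a ^ (γ-2) / (2-γ)) = 4 * (a^(2:ℕ) * a^(γ-2)) / (2-γ) by ring,
              haa]
    have h2 : ∫⁻ y in Set.Ioi c, ENNReal.ofReal (4 * min ((a*y)^2) 1 * y ^ (-(1+γ))) ≤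
        ENNReal.ofReal (4 * a ^ γ / γ) := by
      have hle : ∀ y ∈ Set.Ioi c, ENNReal.ofReal (4 * min ((a*y)^2) 1 * y ^ (-(1+γ))) ≤
          ENNReal.ofReal (4 * y ^ (-(1+γ))) := by
        intro y hy
        apply ENNReal.ofReal_le_ofReal
        have hy0 : 0 < y := hcpos.trans hy
        have h4 : 4 * min ((a*y)^2) 1 ≤ 4 := by
          have := min_le_right ((a*y)^2) 1; linarith
        exact mul_le_mul_of_nonneg_right h4 (Real.rpow_nonneg hy0.le _)
      calc _ ≤ ∫⁻ y in Set.Ioi c, ENNReal.ofReal (4 * y ^ (-(1+γ))) :=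
            setLIntegral_mono (by fun_prop) hle
        _ = ENNReal.ofReal (∫ y in Set.Ioi c, 4 * y ^ (-(1+γ))) := by
            rw [← ofReal_integral_eq_lintegral_ofReal]
            · exact (integrableOn_Ioi_rpow_of_lt (by linarith) hcpos).const_mul _
            · filter_upwards [ae_restrict_mem measurableSet_Ioi] with y hy
              have := Real.rpow_nonneg (hcpos.trans hy).le (-(1+γ))
              positivity
        _ ≤ ENNReal.ofReal (4 * a ^ γ / γ) := by
            apply ENNReal.ofReal_le_ofReal
            rw [integral_const_mul, integral_Ioi_rpow_of_lt (by linarith) hcpos]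
            rw [show -(1+γ)+1 = -γ by ring, hcg2]
            apply le_of_eq; ring
    calc _ ≤ ENNReal.ofReal (4 * a ^ γ / (2 - γ)) + ENNReal.ofReal (4 * a ^ γ / γ) :=
          add_le_add h1 h2
      _ ≤ ENNReal.ofReal (8 * a ^ γ / (γ * (2 - γ))) := by
          have hγ2' : (0:ℝ) < 2 - γ := by linarith
          have hag : (0:ℝ) ≤ a ^ γ := Real.rpow_nonneg ha.le γ
          rw [← ENNReal.ofReal_add (div_nonneg (by positivity) hγ2'.le)
            (div_nonneg (by positivity) hγ0.le)]
          apply ENNReal.ofReal_le_ofReal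
          rw [div_add_div _ _ (by linarith : (2:ℝ)-γ ≠ 0) (by linarith : γ ≠ 0),
            div_le_div_iff₀ (mul_pos hγ2' hγ0) (mul_pos hγ0 hγ2')]
          nlinarith

open scoped RealInnerProductSpace

lemma inner_bound (d : ℕ) (hd : 0 < d) (γ : ℝ) (hγ0 : 0 < γ) (hγ2 : γ < 2)
    (x : EuclideanSpace ℝ (Fin d)) :
    ∫⁻ ω, ENNReal.ofReal
          (((Real.cos ⟪ω, x⟫ - 1) ^ 2 + Real.sin ⟪ω, x⟫ ^ 2) / ‖ω‖ ^ ((d : ℝ) + γ))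
        ∂(volume : Measure (EuclideanSpace ℝ (Fin d))) ≤
      ENNReal.ofReal (16 * π ^ ((d : ℝ) / 2) / (Real.Gamma ((d : ℝ) / 2) * (γ * (2 - γ))) *
        ‖x‖ ^ γ) := by
  haveI : Nonempty (Fin d) := Fin.pos_iff_nonempty.mp hd
  haveI : Nontrivial (EuclideanSpace ℝ (Fin d)) := inferInstance
  set a : ℝ := ‖x‖ with ha
  have ha0 : 0 ≤ a := norm_nonneg x
  have step1 : ∫⁻ ω, ENNReal.ofReal
          (((Real.cos ⟪ω, x⟫ - 1) ^ 2 + Real.sin ⟪ω, x⟫ ^ 2) / ‖ω‖ ^ ((d : ℝ) + γ))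
        ∂(volume : Measure (EuclideanSpace ℝ (Fin d))) ≤
      ∫⁻ ω, (fun r : ℝ => ENNReal.ofReal (4 * min ((a * r)^2) 1 / r ^ ((d : ℝ) + γ))) ‖ω‖
        ∂(volume : Measure (EuclideanSpace ℝ (Fin d))) := by
    apply lintegral_mono
    intro ω
    apply ENNReal.ofReal_le_ofReal
    have hden : (0:ℝ) ≤ ‖ω‖ ^ ((d : ℝ) + γ) := Real.rpow_nonneg (norm_nonneg ω) _
    apply div_le_div_of_nonneg_right ?_ hden
    set t : ℝ := ⟪ω, x⟫ with ht
    have hnum : (Real.cos t - 1) ^ 2 + Real.sin t ^ 2 = 2 - 2 * Real.cos t := by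
      have := Real.sin_sq_add_cos_sq t
      ring_nf
      nlinarith [this]
    have hts : t^2 ≤ (a * ‖ω‖)^2 := by
      have h1 : |t| ≤ ‖ω‖ * ‖x‖ := abs_real_inner_le_norm ω x
      nlinarith [sq_abs t, abs_nonneg t, norm_nonneg ω, norm_nonneg x]
    have hcos1 : 2 - 2 * Real.cos t ≤ t ^ 2 := by
      nlinarith [Real.one_sub_sq_div_two_le_cos (x := t)]
    have hcos2 : 2 - 2 * Real.cos t ≤ 4 := by nlinarith [Real.neg_one_le_cos t]
    rw [hnum]
    rcases le_total ((a * ‖ω‖)^2) 1 with h | h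
    · rw [min_eq_left h]; nlinarith
    · rw [min_eq_right h]; linarith
  have hfr : Module.finrank ℝ (EuclideanSpace ℝ (Fin d)) = d := finrank_euclideanSpace_fin
  have step2 : ∫⁻ ω, (fun r : ℝ => ENNReal.ofReal (4 * min ((a * r)^2) 1 / r ^ ((d : ℝ) + γ))) ‖ω‖
        ∂(volume : Measure (EuclideanSpace ℝ (Fin d))) =
      (d : ℝ≥0∞) * (volume : Measure (EuclideanSpace ℝ (Fin d))) (Metric.ball 0 1) *
        ∫⁻ y in Set.Ioi (0:ℝ), ENNReal.ofReal (4 * min ((a*y)^2) 1 * y ^ (-(1+γ))) := by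
    rw [my_lintegral_norm_addHaar (volume : Measure (EuclideanSpace ℝ (Fin d)))
      (fun r : ℝ => ENNReal.ofReal (4 * min ((a * r)^2) 1 / r ^ ((d : ℝ) + γ))) (by fun_prop), hfr]
    congr 1
    apply setLIntegral_congr_fun measurableSet_Ioi
    intro y hy
    beta_reduce
    have hy0 : (0:ℝ) < y := hy
    rw [← ENNReal.ofReal_mul (by positivity)]
    congr 1
    have h1 : (y:ℝ)^(d-1:ℕ) = y ^ ((d:ℝ)-1) := by
      rw [← Real.rpow_natCast y (d-1)]
      congr 1
      rw [Nat.cast_sub hd]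
      norm_num
    have h2 : y ^ ((d:ℝ)-1) * (y ^ ((d:ℝ)+γ))⁻¹ = y ^ (-(1+γ)) := by
      rw [← Real.rpow_neg hy0.le, ← Real.rpow_add hy0]
      congr 1
      ring
    rw [h1, div_eq_mul_inv, ← h2]
    ring
  have hvol : (d : ℝ≥0∞) * (volume : Measure (EuclideanSpace ℝ (Fin d))) (Metric.ball 0 1) =
      ENNReal.ofReal (2 * π ^ ((d : ℝ) / 2) / Real.Gamma ((d : ℝ) / 2)) := by
    rw [EuclideanSpace.volume_ball]
    simp only [ENNReal.ofReal_one, one_pow, Fintype.card_fin, one_mul]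
    rw [← ENNReal.ofReal_natCast d, ← ENNReal.ofReal_mul (by positivity)]
    congr 1
    have hΓpos : 0 < Real.Gamma ((d:ℝ)/2) := Real.Gamma_pos_of_pos (by positivity)
    have hΓ1 : Real.Gamma ((d:ℝ)/2 + 1) = ((d:ℝ)/2) * Real.Gamma ((d:ℝ)/2) :=
      Real.Gamma_add_one (by positivity)
    have hsq : Real.sqrt π ^ d = π ^ ((d : ℝ)/2) := by
      rw [Real.sqrt_eq_rpow, ← Real.rpow_natCast (π ^ ((1:ℝ)/2)) d, ← Real.rpow_mul pi_pos.le]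
      congr 1
      ring
    rw [hΓ1, hsq]
    have hd' : (0:ℝ) < d := Nat.cast_pos.mpr hd
    field_simp
  have hΓpos : 0 < Real.Gamma ((d:ℝ)/2) := Real.Gamma_pos_of_pos (by positivity)
  calc _ ≤ _ := step1
    _ = _ := step2
    _ ≤ ENNReal.ofReal (2 * π ^ ((d : ℝ) / 2) / Real.Gamma ((d : ℝ) / 2)) *
          ENNReal.ofReal (8 * a ^ γ / (γ * (2 - γ))) := by
        rw [hvol]
        exact mul_le_mul_right (oneDim_bound γ hγ0 hγ2 a ha0) _
    _ ≤ _ := by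
        rw [← ENNReal.ofReal_mul (by positivity)]
        apply ENNReal.ofReal_le_ofReal
        apply le_of_eq
        field_simp
        ring
theorem lintegral_char_bound (d : ℕ) (hd : 0 < d) (γ : ℝ) (hγ0 : 0 < γ) (hγ2 : γ < 2)
    (μ : Measure (EuclideanSpace ℝ (Fin d))) [IsProbabilityMeasure μ]
    (hInt : Integrable (fun x => ‖x‖ ^ γ) μ) :
    ∫⁻ x, (∫⁻ ω,
        ENNReal.ofReal
          (((Real.cos ⟪ω, x⟫ - 1) ^ 2 + Real.sin ⟪ω, x⟫ ^ 2) / ‖ω‖ ^ ((d : ℝ) + γ))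
        ∂(volume : Measure (EuclideanSpace ℝ (Fin d)))) ∂μ ≤
      ENNReal.ofReal
        (16 * π ^ ((d : ℝ) / 2) * (∫ x, ‖x‖ ^ γ ∂μ) /
          (Real.Gamma ((d : ℝ) / 2) * (γ * (2 - γ)))) := by
  have hΓpos : 0 < Real.Gamma ((d:ℝ)/2) := Real.Gamma_pos_of_pos (by positivity)
  have hC : (0:ℝ) ≤ 16 * π ^ ((d : ℝ) / 2) / (Real.Gamma ((d : ℝ) / 2) * (γ * (2 - γ))) := by
    have h2 : (0:ℝ) < 2 - γ := by linarith
    positivity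
  calc ∫⁻ x, (∫⁻ ω, ENNReal.ofReal
          (((Real.cos ⟪ω, x⟫ - 1) ^ 2 + Real.sin ⟪ω, x⟫ ^ 2) / ‖ω‖ ^ ((d : ℝ) + γ))
        ∂(volume : Measure (EuclideanSpace ℝ (Fin d)))) ∂μ
      ≤ ∫⁻ x, ENNReal.ofReal
          (16 * π ^ ((d : ℝ) / 2) / (Real.Gamma ((d : ℝ) / 2) * (γ * (2 - γ))) * ‖x‖ ^ γ) ∂μ :=
        lintegral_mono fun x => inner_bound d hd γ hγ0 hγ2 x
    _ = ENNReal.ofReal (∫ x,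
          16 * π ^ ((d : ℝ) / 2) / (Real.Gamma ((d : ℝ) / 2) * (γ * (2 - γ))) * ‖x‖ ^ γ ∂μ) := by
        rw [← ofReal_integral_eq_lintegral_ofReal (hInt.const_mul _)]
        filter_upwards with x
        exact mul_nonneg hC (Real.rpow_nonneg (norm_nonneg x) γ)
    _ ≤ _ := by
        apply ENNReal.ofReal_le_ofReal
        rw [integral_const_mul]
        apply le_of_eq
        ring
end

section
/- Fix $\gamma \in (1,2)$. For every $x > 0$, $\int_0^\infty \frac{\cos(\omega x) - 1}{\omega^{(1+\gamma)/2}}\,d\omega = x^{(\gamma-1)/2}\cos\left(\frac{\pi(\gamma-1)}{4}\right)\Gamma\left(\frac{1-\gamma}{2}\right)$, where the integral is absolutely convergent and $\Gamma\left(\frac{1-\gamma}{2}\right)$ denotes the analytically continued Gamma function (which is negative for $\frac{1-\gamma}{2} \in (-1/2, 0)$). -/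
open Real MeasureTheory Set Filter Topology

lemma cos1_abs_le_sq (y : ℝ) : |Real.cos y - 1| ≤ y ^ 2 / 2 := by
  rw [abs_sub_comm, abs_of_nonneg (by linarith [Real.cos_le_one y])]
  linarith [Real.one_sub_sq_div_two_le_cos (x := y)]

lemma cos1_abs_le_two (y : ℝ) : |Real.cos y - 1| ≤ 2 := by
  have h1 := Real.cos_le_one y; have h2 := Real.neg_one_le_cos y
  rw [abs_le]; constructor <;> linarith

lemma meas_aux (s x : ℝ) : Measurable (fun ω : ℝ => (Real.cos (ω * x) - 1) / ω ^ s) :=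
  ((Real.measurable_cos.comp (measurable_id.mul_const x)).sub measurable_const).div
    (measurable_id.pow_const s)

lemma I1 {s : ℝ} (x : ℝ) (hs1 : 1 < s) (hs2 : s < 3) :
    IntegrableOn (fun ω : ℝ => (Real.cos (ω * x) - 1) / ω ^ s) (Ioi 0) := by
  have hmeas := meas_aux s x
  rw [← Ioc_union_Ioi_eq_Ioi (zero_le_one (α := ℝ)), integrableOn_union]
  constructor
  · apply Integrable.mono' (g := fun ω : ℝ => x ^ 2 / 2 * ω ^ (2 - s))
    · apply Integrable.const_mul
      have := (intervalIntegral.intervalIntegrable_rpow' (a := 0) (b := 1) (r := 2 - s) (by linarith))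
      rwa [intervalIntegrable_iff_integrableOn_Ioc_of_le zero_le_one] at this
    · exact hmeas.aestronglyMeasurable.restrict
    · filter_upwards [ae_restrict_mem measurableSet_Ioc] with ω hω
      have hω0 : 0 < ω := hω.1
      have hωs : 0 < ω ^ s := Real.rpow_pos_of_pos hω0 s
      rw [Real.norm_eq_abs, abs_div, abs_of_pos hωs, div_le_iff₀ hωs]
      calc |Real.cos (ω * x) - 1| ≤ (ω * x) ^ 2 / 2 := cos1_abs_le_sq _
        _ = x ^ 2 / 2 * ω ^ (2 - s) * ω ^ s := by
            rw [Real.rpow_sub hω0, show (2:ℝ) = ((2:ℕ):ℝ) by norm_num, Real.rpow_natCast]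
            field_simp
  · apply Integrable.mono' (g := fun ω : ℝ => 2 * ω ^ (-s))
    · exact (integrableOn_Ioi_rpow_of_lt (by linarith) one_pos).const_mul 2
    · exact hmeas.aestronglyMeasurable.restrict
    · filter_upwards [ae_restrict_mem measurableSet_Ioi] with ω hω
      have hω0 : (0:ℝ) < ω := lt_trans one_pos hω
      have hωs : 0 < ω ^ s := Real.rpow_pos_of_pos hω0 s
      rw [Real.norm_eq_abs, abs_div, abs_of_pos hωs, div_le_iff₀ hωs]
      calc |Real.cos (ω * x) - 1| ≤ 2 := cos1_abs_le_two _
        _ = 2 * ω ^ (-s) * ω ^ s := by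
            rw [Real.rpow_neg hω0.le]
            field_simp

lemma lap_cos {t : ℝ} (ht : 0 < t) :
    ∫ ω in Ioi (0:ℝ), (Real.cos ω - 1) * Real.exp (-(t * ω)) = -(1 / (t * (1 + t ^ 2))) := by
  have h1t : (0:ℝ) < 1 + t ^ 2 := by positivity
  set F : ℝ → ℝ := fun ω => Real.exp (-(t * ω)) * (Real.sin ω - t * Real.cos ω) / (1 + t ^ 2)
    + Real.exp (-(t * ω)) / t with hF
  have hE : ∀ ω : ℝ, HasDerivAt (fun ω : ℝ => Real.exp (-(t * ω)))
      (Real.exp (-(t * ω)) * (-t)) ω := by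
    intro ω
    simpa using (((hasDerivAt_id ω).const_mul t).neg).exp
  have hd : ∀ ω ∈ Ici (0:ℝ), HasDerivAt F ((Real.cos ω - 1) * Real.exp (-(t * ω))) ω := by
    intro ω _
    have h1 : HasDerivAt (fun ω : ℝ => Real.sin ω - t * Real.cos ω)
        (Real.cos ω - t * (-Real.sin ω)) ω :=
      (Real.hasDerivAt_sin ω).sub ((Real.hasDerivAt_cos ω).const_mul t)
    have := (((hE ω).mul h1).div_const (1 + t ^ 2)).add ((hE ω).div_const t)
    refine this.congr_deriv ?_
    field_simp
    ring
  have hint : IntegrableOn (fun ω => (Real.cos ω - 1) * Real.exp (-(t * ω))) (Ioi 0) := by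
    apply Integrable.mono' (g := fun ω : ℝ => 2 * Real.exp (-t * ω))
    · exact (exp_neg_integrableOn_Ioi 0 ht).const_mul 2
    · exact ((Real.measurable_cos.sub measurable_const).mul
        ((measurable_const.mul measurable_id).neg.exp)).aestronglyMeasurable.restrict
    · filter_upwards with ω
      rw [Real.norm_eq_abs, abs_mul, abs_of_pos (Real.exp_pos _), neg_mul]
      have h2 : |Real.cos ω - 1| ≤ 2 := by
        have h1 := Real.cos_le_one ω; have h2 := Real.neg_one_le_cos ω
        rw [abs_le]; constructor <;> linarith
      nlinarith [Real.exp_pos (-(t*ω))]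
  have hexp : Tendsto (fun ω : ℝ => Real.exp (-(t * ω))) atTop (𝓝 0) := by
    apply Real.tendsto_exp_atBot.comp
    simp_rw [neg_mul_eq_neg_mul]
    exact tendsto_id.const_mul_atTop_of_neg (by linarith)
  have hlim : Tendsto F atTop (𝓝 0) := by
    apply squeeze_zero_norm (a := fun ω : ℝ => ((1 + t) / (1 + t ^ 2) + 1 / t) * Real.exp (-(t * ω)))
    · intro ω
      have he := Real.exp_pos (-(t * ω))
      have hsc : |Real.sin ω - t * Real.cos ω| ≤ 1 + t := by
        have := abs_sub_abs_le_abs_sub (Real.sin ω) (t * Real.cos ω)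
        have h1 := Real.abs_sin_le_one ω
        have h2 : |t * Real.cos ω| ≤ t := by
          rw [abs_mul, abs_of_pos ht]
          nlinarith [Real.abs_cos_le_one ω]
        calc |Real.sin ω - t * Real.cos ω| ≤ |Real.sin ω| + |t * Real.cos ω| := abs_sub _ _
          _ ≤ 1 + t := by linarith
      rw [hF, Real.norm_eq_abs]
      calc |Real.exp (-(t * ω)) * (Real.sin ω - t * Real.cos ω) / (1 + t ^ 2)
            + Real.exp (-(t * ω)) / t|
          ≤ |Real.exp (-(t * ω)) * (Real.sin ω - t * Real.cos ω) / (1 + t ^ 2)|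
            + |Real.exp (-(t * ω)) / t| := abs_add_le _ _
        _ ≤ Real.exp (-(t * ω)) * (1 + t) / (1 + t ^ 2) + Real.exp (-(t * ω)) / t := by
            rw [abs_div, abs_div, abs_mul, abs_of_pos he, abs_of_pos h1t, abs_of_pos ht]
            gcongr
        _ = ((1 + t) / (1 + t ^ 2) + 1 / t) * Real.exp (-(t * ω)) := by ring
    · rw [show (0:ℝ) = ((1 + t) / (1 + t ^ 2) + 1 / t) * 0 by ring]
      exact hexp.const_mul _
  have := integral_Ioi_of_hasDerivAt_of_tendsto' hd hint hlim
  rw [this, hF]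
  simp only [mul_zero, neg_zero, Real.exp_zero, Real.sin_zero, Real.cos_zero]
  field_simp
  ring

lemma step1 {s : ℝ} (hs1 : 1 < s) (hs2 : s < 2) :
    ∫ ω in Ioi (0:ℝ), (Real.cos ω - 1) / ω ^ s
      = (Real.Gamma s)⁻¹ * ∫ t in Ioi (0:ℝ), t ^ (s - 1) * -(1 / (t * (1 + t ^ 2))) := by
  have hs0 : 0 < s := by linarith
  have hΓ : 0 < Real.Gamma s := Real.Gamma_pos_of_pos hs0
  set μ : Measure ℝ := volume.restrict (Ioi 0) with hμ
  set f : ℝ → ℝ → ℝ := fun ω t => (Real.cos ω - 1) * (t ^ (s - 1) * Real.exp (-(ω * t)))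
    with hf
  have hFm : AEStronglyMeasurable (Function.uncurry f) (μ.prod μ) := by
    apply Measurable.aestronglyMeasurable
    exact ((Real.measurable_cos.comp measurable_fst).sub measurable_const).mul
      ((measurable_snd.pow_const (s - 1)).mul ((measurable_fst.mul measurable_snd).neg.exp))
  -- for each ω > 0, integrability in t
  have hslice : ∀ ω : ℝ, 0 < ω → Integrable (fun t => f ω t) μ := by
    intro ω hω
    have h0 : IntegrableOn (fun t : ℝ => t ^ (s - 1) * Real.exp (-ω * t ^ (1:ℝ))) (Ioi 0) :=
      integrableOn_rpow_mul_exp_neg_mul_rpow (by linarith) one_pos hω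
    have h1 : IntegrableOn (fun t : ℝ => t ^ (s - 1) * Real.exp (-(ω * t))) (Ioi 0) := by
      apply h0.congr_fun (fun t ht => ?_) measurableSet_Ioi
      rw [Real.rpow_one, neg_mul]
    exact h1.const_mul _
  -- the inner integral value
  have hval : ∀ ω : ℝ, 0 < ω →
      ∫ t, t ^ (s - 1) * Real.exp (-(ω * t)) ∂μ = (1 / ω) ^ s * Real.Gamma s := by
    intro ω hω
    exact integral_rpow_mul_exp_neg_mul_Ioi hs0 hω
  have hFint : Integrable (Function.uncurry f) (μ.prod μ) := by
    rw [integrable_prod_iff hFm]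
    constructor
    · filter_upwards [ae_restrict_mem measurableSet_Ioi] with ω hω
      exact hslice ω hω
    · -- integrable of ω ↦ ∫ ‖f ω t‖
      have hgood : Integrable (fun ω => |Real.cos ω - 1| / ω ^ s * Real.Gamma s) μ := by
        have := ((I1 1 hs1 (by linarith)).abs).mul_const (Real.Gamma s)
        apply this.congr
        filter_upwards [ae_restrict_mem measurableSet_Ioi] with ω hω
        simp [mul_one, abs_div, abs_of_pos (Real.rpow_pos_of_pos hω s)]
      apply hgood.congr
      filter_upwards [ae_restrict_mem measurableSet_Ioi] with ω hω
      have h2 : ∫ t, ‖Function.uncurry f (ω, t)‖ ∂μ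
          = |Real.cos ω - 1| * ((1 / ω) ^ s * Real.Gamma s) := by
        rw [← hval ω hω, ← integral_const_mul]
        apply integral_congr_ae
        filter_upwards [ae_restrict_mem measurableSet_Ioi] with t ht
        simp only [Function.uncurry, hf]
        rw [Real.norm_eq_abs, abs_mul, abs_mul,
          abs_of_nonneg (Real.rpow_nonneg ht.out.le _), abs_of_pos (Real.exp_pos _)]
      rw [h2, one_div, Real.inv_rpow hω.out.le, div_eq_mul_inv]
      ring
  -- main computation
  calc ∫ ω in Ioi (0:ℝ), (Real.cos ω - 1) / ω ^ s
      = ∫ ω, (Real.Gamma s)⁻¹ * ∫ t, f ω t ∂μ ∂μ := by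
        apply integral_congr_ae
        filter_upwards [ae_restrict_mem measurableSet_Ioi] with ω hω
        have hin : ∫ t, f ω t ∂μ = (Real.cos ω - 1) * ((1 / ω) ^ s * Real.Gamma s) := by
          rw [hf]
          simp only
          rw [integral_const_mul, hval ω hω]
        rw [hin, one_div, Real.inv_rpow hω.out.le, div_eq_mul_inv]
        field_simp
    _ = (Real.Gamma s)⁻¹ * ∫ ω, ∫ t, f ω t ∂μ ∂μ := integral_const_mul _ _
    _ = (Real.Gamma s)⁻¹ * ∫ t, ∫ ω, f ω t ∂μ ∂μ := by rw [integral_integral_swap hFint]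
    _ = (Real.Gamma s)⁻¹ * ∫ t in Ioi (0:ℝ), t ^ (s - 1) * -(1 / (t * (1 + t ^ 2))) := by
        congr 1
        apply integral_congr_ae
        filter_upwards [ae_restrict_mem measurableSet_Ioi] with t ht
        have : ∀ ω : ℝ, f ω t = t ^ (s - 1) * ((Real.cos ω - 1) * Real.exp (-(t * ω))) := by
          intro ω; rw [hf]; simp only; rw [mul_comm ω t]; ring
        simp_rw [this]
        rw [integral_const_mul, hμ, lap_cos ht.out]

lemma I3 {m : ℝ} (hm0 : 0 < m) (hm1 : m < 1) :
    IntegrableOn (fun v : ℝ => v ^ (m - 1) / (1 + v)) (Ioi 0) := by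
  have hmeas : Measurable (fun v : ℝ => v ^ (m - 1) / (1 + v)) :=
    (measurable_id.pow_const (m - 1)).div (measurable_const.add measurable_id)
  rw [← Ioc_union_Ioi_eq_Ioi (zero_le_one (α := ℝ)), integrableOn_union]
  constructor
  · apply Integrable.mono' (g := fun v : ℝ => v ^ (m - 1))
    · have := (intervalIntegral.intervalIntegrable_rpow' (a := 0) (b := 1) (r := m - 1)
        (by linarith))
      rwa [intervalIntegrable_iff_integrableOn_Ioc_of_le zero_le_one] at this
    · exact hmeas.aestronglyMeasurable.restrict
    · filter_upwards [ae_restrict_mem measurableSet_Ioc] with v hv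
      have hv0 : 0 < v := hv.1
      have h1v : (0:ℝ) < 1 + v := by linarith
      rw [Real.norm_eq_abs, abs_div, abs_of_pos (Real.rpow_pos_of_pos hv0 _), abs_of_pos h1v,
        div_le_iff₀ h1v]
      nlinarith [Real.rpow_pos_of_pos hv0 (m - 1)]
  · apply Integrable.mono' (g := fun v : ℝ => v ^ (m - 2))
    · exact integrableOn_Ioi_rpow_of_lt (by linarith) one_pos
    · exact hmeas.aestronglyMeasurable.restrict
    · filter_upwards [ae_restrict_mem measurableSet_Ioi] with v hv
      have hv0 : (0:ℝ) < v := lt_trans one_pos hv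
      have h1v : (0:ℝ) < 1 + v := by linarith
      rw [Real.norm_eq_abs, abs_div, abs_of_pos (Real.rpow_pos_of_pos hv0 _), abs_of_pos h1v,
        div_le_iff₀ h1v]
      have : v ^ (m - 2) * v = v ^ (m - 1) := by
        nth_rewrite 2 [← Real.rpow_one v]
        rw [← Real.rpow_add hv0]
        congr 1
        ring
      nlinarith [Real.rpow_pos_of_pos hv0 (m - 2), Real.rpow_pos_of_pos hv0 (m - 1)]

lemma Mval {m : ℝ} (hm0 : 0 < m) (hm1 : m < 1) :
    ∫ v in Ioi (0:ℝ), v ^ (m - 1) / (1 + v) = Real.Gamma m * Real.Gamma (1 - m) := by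
  set μ : Measure ℝ := volume.restrict (Ioi 0) with hμ
  set g : ℝ → ℝ → ℝ := fun v u => v ^ (m - 1) * Real.exp (-((1 + v) * u)) with hg
  have hGm : AEStronglyMeasurable (Function.uncurry g) (μ.prod μ) := by
    apply Measurable.aestronglyMeasurable
    exact (measurable_fst.pow_const (m - 1)).mul
      (((measurable_const.add measurable_fst).mul measurable_snd).neg.exp)
  have hslice : ∀ v : ℝ, 0 < v → Integrable (fun u => g v u) μ := by
    intro v hv
    have h1v : (0:ℝ) < 1 + v := by linarith
    have h0 : IntegrableOn (fun u : ℝ => Real.exp (-(1 + v) * u)) (Ioi 0) :=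
      exp_neg_integrableOn_Ioi 0 h1v
    have h1 : IntegrableOn (fun u : ℝ => Real.exp (-((1 + v) * u))) (Ioi 0) := by
      apply h0.congr_fun (fun u _ => ?_) measurableSet_Ioi
      rw [neg_mul]
    exact h1.const_mul _
  have hval : ∀ v : ℝ, 0 < v →
      ∫ u, Real.exp (-((1 + v) * u)) ∂μ = 1 / (1 + v) := by
    intro v hv
    have h1v : (0:ℝ) < 1 + v := by linarith
    have h0 := integral_rpow_mul_exp_neg_mul_Ioi (a := 1) (r := 1 + v) one_pos h1v
    rw [Real.rpow_one, Real.Gamma_one, mul_one] at h0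
    rw [← h0]
    apply integral_congr_ae
    filter_upwards with u
    rw [sub_self, Real.rpow_zero, one_mul]
  have hGint : Integrable (Function.uncurry g) (μ.prod μ) := by
    rw [integrable_prod_iff hGm]
    constructor
    · filter_upwards [ae_restrict_mem measurableSet_Ioi] with v hv
      exact hslice v hv
    · have hgood : Integrable (fun v => v ^ (m - 1) / (1 + v)) μ := I3 hm0 hm1
      apply hgood.congr
      filter_upwards [ae_restrict_mem measurableSet_Ioi] with v hv
      have h2 : ∫ u, ‖Function.uncurry g (v, u)‖ ∂μ
          = v ^ (m - 1) * (1 / (1 + v)) := by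
        rw [← hval v hv.out, ← integral_const_mul]
        apply integral_congr_ae
        filter_upwards with u
        simp only [Function.uncurry, hg]
        rw [Real.norm_eq_abs, abs_mul, abs_of_nonneg (Real.rpow_nonneg hv.out.le _),
          abs_of_pos (Real.exp_pos _)]
      rw [h2, mul_one_div]
  calc ∫ v in Ioi (0:ℝ), v ^ (m - 1) / (1 + v)
      = ∫ v, ∫ u, g v u ∂μ ∂μ := by
        apply integral_congr_ae
        filter_upwards [ae_restrict_mem measurableSet_Ioi] with v hv
        rw [hg]
        simp only
        rw [integral_const_mul, hval v hv.out, mul_one_div]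
    _ = ∫ u, ∫ v, g v u ∂μ ∂μ := integral_integral_swap hGint
    _ = ∫ u, Real.exp (-u) * ((1 / u) ^ m * Real.Gamma m) ∂μ := by
        apply integral_congr_ae
        filter_upwards [ae_restrict_mem measurableSet_Ioi] with u hu
        have : ∀ v : ℝ, g v u = Real.exp (-u) * (v ^ (m - 1) * Real.exp (-(u * v))) := by
          intro v
          rw [hg]
          simp only
          rw [show -((1 + v) * u) = -u + -(u * v) by ring, Real.exp_add]
          ring
        simp_rw [this]
        rw [integral_const_mul]
        congr 1
        exact integral_rpow_mul_exp_neg_mul_Ioi hm0 hu.out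
    _ = Real.Gamma m * ∫ u in Ioi (0:ℝ), Real.exp (-u) * u ^ (1 - m - 1) := by
        rw [← integral_const_mul]
        apply integral_congr_ae
        filter_upwards [ae_restrict_mem measurableSet_Ioi] with u hu
        rw [one_div, Real.inv_rpow hu.out.le, ← Real.rpow_neg hu.out.le,
          show 1 - m - 1 = -m by ring]
        ring
    _ = Real.Gamma m * Real.Gamma (1 - m) := by
        rw [← Real.Gamma_eq_integral (by linarith)]

lemma Jval {s : ℝ} (hs1 : 1 < s) (hs2 : s < 2) :
    ∫ t in Ioi (0:ℝ), t ^ (s - 2) / (1 + t ^ 2)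
      = Real.Gamma ((s - 1) / 2) * Real.Gamma (1 - (s - 1) / 2) / 2 := by
  set m : ℝ := (s - 1) / 2 with hm
  have hm0 : 0 < m := by rw [hm]; linarith
  have hm1 : m < 1 := by rw [hm]; linarith
  have key := integral_comp_rpow_Ioi_of_pos
    (g := fun v : ℝ => v ^ (m - 1) / (1 + v)) (p := 2) two_pos
  rw [Mval hm0 hm1] at key
  have congrL : ∫ x in Ioi (0:ℝ), ((2:ℝ) * x ^ ((2:ℝ) - 1)) • ((x ^ (2:ℝ)) ^ (m - 1) / (1 + x ^ (2:ℝ)))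
      = ∫ x in Ioi (0:ℝ), 2 * (x ^ (s - 2) / (1 + x ^ 2)) := by
    apply integral_congr_ae
    filter_upwards [ae_restrict_mem measurableSet_Ioi] with x hx
    have hx0 : (0:ℝ) < x := hx.out
    have e1 : x ^ ((2:ℝ) - 1) = x := by norm_num
    have e2 : (x ^ (2:ℝ)) ^ (m - 1) = x ^ (s - 3) := by
      rw [← Real.rpow_mul hx0.le, show 2 * (m - 1) = s - 3 by rw [hm]; ring]
    have e3 : x ^ (2:ℝ) = x ^ 2 := by
      rw [show (2:ℝ) = ((2:ℕ):ℝ) by norm_num, Real.rpow_natCast]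
    have e4 : x * x ^ (s - 3) = x ^ (s - 2) := by
      nth_rewrite 1 [← Real.rpow_one x]
      rw [← Real.rpow_add hx0]
      congr 1
      ring
    rw [smul_eq_mul, e1, e2, e3]
    rw [← e4]
    ring
  rw [congrL, integral_const_mul] at key
  linarith

lemma const_eval {s : ℝ} (hs1 : 1 < s) (hs2 : s < 2) :
    ∫ ω in Ioi (0:ℝ), (Real.cos ω - 1) / ω ^ s
      = Real.cos (π * (1 - s) / 2) * Real.Gamma (1 - s) := by
  have hΓ : 0 < Real.Gamma s := Real.Gamma_pos_of_pos (by linarith)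
  have h1 : ∫ t in Ioi (0:ℝ), t ^ (s - 1) * -(1 / (t * (1 + t ^ 2)))
      = -∫ t in Ioi (0:ℝ), t ^ (s - 2) / (1 + t ^ 2) := by
    rw [← integral_neg]
    apply integral_congr_ae
    filter_upwards [ae_restrict_mem measurableSet_Ioi] with t ht
    have ht0 : (0:ℝ) < t := ht.out
    have e : t ^ (s - 2) = t ^ (s - 1) / t := by
      rw [show s - 2 = s - 1 - 1 by ring, Real.rpow_sub ht0, Real.rpow_one]
    have h1t : (0:ℝ) < 1 + t ^ 2 := by positivity
    rw [e]
    field_simp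
  rw [step1 hs1 hs2, h1, Jval hs1 hs2]
  set m : ℝ := (s - 1) / 2 with hm
  set θ : ℝ := π * (1 - s) / 2 with hθ
  have hpi := Real.pi_pos
  have hsinθ : Real.sin θ < 0 := by
    apply Real.sin_neg_of_neg_of_neg_pi_lt
    · rw [hθ]; nlinarith
    · rw [hθ]; nlinarith
  have hcosθ : 0 < Real.cos θ := by
    apply Real.cos_pos_of_mem_Ioo
    constructor
    · rw [hθ]; nlinarith
    · rw [hθ]; nlinarith
  have hrefl1 : Real.Gamma m * Real.Gamma (1 - m) = π / Real.sin (π * m) :=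
    Real.Gamma_mul_Gamma_one_sub m
  have hrefl2 : Real.Gamma s * Real.Gamma (1 - s) = π / Real.sin (π * s) :=
    Real.Gamma_mul_Gamma_one_sub s
  have hsin1 : Real.sin (π * m) = -Real.sin θ := by
    rw [show π * m = -θ by rw [hθ, hm]; ring, Real.sin_neg]
  have hsin2 : Real.sin (π * s) = 2 * Real.sin θ * Real.cos θ := by
    rw [show π * s = π - 2 * θ by rw [hθ]; ring, Real.sin_pi_sub, Real.sin_two_mul]
  have key : Real.cos θ * (Real.Gamma s * Real.Gamma (1 - s))
      = -(Real.Gamma m * Real.Gamma (1 - m) / 2) := by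
    rw [hrefl2, hrefl1, hsin1, hsin2]
    field_simp [hsinθ.ne, hcosθ.ne']
  have : Real.Gamma (1 - s) = (Real.Gamma s)⁻¹ * -(Real.Gamma m * Real.Gamma (1 - m) / 2)
      * (Real.cos θ)⁻¹ := by
    rw [← key]
    field_simp [hcosθ.ne']
  rw [this]
  field_simp

theorem cos_sub_one_integral (γ : ℝ) (hγ1 : 1 < γ) (hγ2 : γ < 2) (x : ℝ) (hx : 0 < x) :
    IntegrableOn (fun ω : ℝ => (Real.cos (ω * x) - 1) / ω ^ ((1 + γ) / 2)) (Ioi 0) ∧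
    ∫ ω in Ioi (0 : ℝ), (Real.cos (ω * x) - 1) / ω ^ ((1 + γ) / 2) =
      x ^ ((γ - 1) / 2) * Real.cos (π * (γ - 1) / 4) * Real.Gamma ((1 - γ) / 2) := by
  set s : ℝ := (1 + γ) / 2 with hs
  have hs1 : 1 < s := by rw [hs]; linarith
  have hs2 : s < 2 := by rw [hs]; linarith
  refine ⟨I1 x hs1 (by linarith), ?_⟩
  have hxs : 0 < x ^ s := Real.rpow_pos_of_pos hx s
  have hscale : ∫ ω in Ioi (0:ℝ), (Real.cos (ω * x) - 1) / ω ^ s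
      = x ^ (s - 1) * ∫ u in Ioi (0:ℝ), (Real.cos u - 1) / u ^ s := by
    have h0 : ∫ ω in Ioi (0:ℝ), (Real.cos (ω * x) - 1) / ω ^ s
        = ∫ ω in Ioi (0:ℝ), x ^ s * ((Real.cos (ω * x) - 1) / (ω * x) ^ s) := by
      apply integral_congr_ae
      filter_upwards [ae_restrict_mem measurableSet_Ioi] with ω hω
      rw [Real.mul_rpow hω.out.le hx.le]
      have hωs : 0 < ω ^ s := Real.rpow_pos_of_pos hω.out s
      field_simp
    rw [h0, integral_const_mul]
    have h2 := integral_comp_mul_right_Ioi (fun u => (Real.cos u - 1) / u ^ s) 0 hx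
    rw [zero_mul] at h2
    rw [h2, smul_eq_mul, ← mul_assoc, Real.rpow_sub hx, Real.rpow_one, div_eq_mul_inv]
  rw [hscale, const_eval hs1 hs2]
  have e3 : Real.cos (π * (1 - s) / 2) = Real.cos (π * (γ - 1) / 4) := by
    rw [show π * (1 - s) / 2 = -(π * (γ - 1) / 4) by rw [hs]; ring, Real.cos_neg]
  rw [show s - 1 = (γ - 1) / 2 by rw [hs]; ring, e3,
    show (1:ℝ) - s = (1 - γ) / 2 by rw [hs]; ring]
  ring
end

section
/- Let $f : \mathbb{R}^d \to \mathbb{R}$ be integrable with $\int f = 0$, $\int |f| = 2\epsilon$, and $\mathrm{supp}(f) \subseteq \mathbb{B}(0,1)$. Let $0 < d - s < d$ with $s > d/2$ (e.g. $s = (d+\gamma)/2$, $\gamma \in (0, \min\{d,2\})$), and let $I_s f(x) = \frac{1}{c_s}\int \frac{f(y)}{\|x-y\|^{d-s}}\,dy$ with $c_s = \pi^{d/2}2^s\Gamma(s/2)/\Gamma((d-s)/2)$. Then for all $\|x\| > 2$, $|I_s f(x)| \leq \frac{\epsilon}{c_s}\cdot\frac{2(d-s)}{(\|x\|-1)^{d-s+1}}$.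 -/
open MeasureTheory Real

theorem riesz_tail_bound (d : ℕ) (hd : 0 < d) (s : ℝ)
    (hs_half : (d : ℝ) / 2 < s) (hs_d : s < d)
    (f : EuclideanSpace ℝ (Fin d) → ℝ)
    (hf : Integrable f (volume : Measure (EuclideanSpace ℝ (Fin d))))
    (ε : ℝ) (hε : 0 ≤ ε)
    (hzero : ∫ y, f y = 0)
    (habs : ∫ y, |f y| = 2 * ε)
    (hsupp : Function.support f ⊆ Metric.closedBall 0 1) :
    ∀ x : EuclideanSpace ℝ (Fin d), 2 < ‖x‖ →
      |(π ^ ((d : ℝ) / 2) * 2 ^ s * Real.Gamma (s / 2) /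
          Real.Gamma (((d : ℝ) - s) / 2))⁻¹ *
        ∫ y, f y / ‖x - y‖ ^ ((d : ℝ) - s)| ≤
      ε / (π ^ ((d : ℝ) / 2) * 2 ^ s * Real.Gamma (s / 2) /
          Real.Gamma (((d : ℝ) - s) / 2)) *
        (2 * ((d : ℝ) - s) / (‖x‖ - 1) ^ ((d : ℝ) - s + 1)) := by
  intro x hx
  have hd1 : (1:ℝ) ≤ (d:ℝ) := by exact_mod_cast hd
  set α : ℝ := (d : ℝ) - s with hα_def
  have hα : 0 < α := by simp only [hα_def]; linarith
  have hs0 : 0 < s := by linarith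
  set c : ℝ := π ^ ((d : ℝ) / 2) * 2 ^ s * Real.Gamma (s / 2) /
      Real.Gamma (((d : ℝ) - s) / 2) with hc_def
  have hc_pos : 0 < c := by
    apply div_pos
    · have h1 : (0:ℝ) < π ^ ((d : ℝ) / 2) := Real.rpow_pos_of_pos Real.pi_pos _
      have h2 : (0:ℝ) < (2:ℝ) ^ s := Real.rpow_pos_of_pos (by norm_num) _
      have h3 : 0 < Real.Gamma (s / 2) := Real.Gamma_pos_of_pos (by linarith)
      positivity
    · exact Real.Gamma_pos_of_pos (by linarith)
  set R : ℝ := ‖x‖ with hR_def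
  have hR1 : (1:ℝ) < R - 1 := by simp only [hR_def]; linarith
  have hR1pos : (0:ℝ) < R - 1 := by linarith
  have hR2pos : (0:ℝ) < R + 1 := by linarith
  set a : ℝ := ((R + 1) ^ α)⁻¹ with ha_def
  set b : ℝ := ((R - 1) ^ α)⁻¹ with hb_def
  have hpow1 : (0:ℝ) < (R - 1) ^ α := Real.rpow_pos_of_pos hR1pos _
  have hpow2 : (0:ℝ) < (R + 1) ^ α := Real.rpow_pos_of_pos hR2pos _
  have ha0 : 0 < a := by positivity
  have hb0 : 0 < b := by positivity
  have hab : a ≤ b := by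
    apply inv_anti₀ hpow1
    exact Real.rpow_le_rpow (le_of_lt hR1pos) (by linarith) (le_of_lt hα)
  set c₀ : ℝ := (a + b) / 2 with hc₀_def
  -- pointwise bounds on the support
  have hbound : ∀ y : EuclideanSpace ℝ (Fin d), f y ≠ 0 →
      a ≤ (‖x - y‖ ^ α)⁻¹ ∧ (‖x - y‖ ^ α)⁻¹ ≤ b := by
    intro y hy
    have hy1 : ‖y‖ ≤ 1 := by
      have := hsupp (Function.mem_support.mpr hy)
      simpa [mem_closedBall_zero_iff] using this
    have hlo : R - 1 ≤ ‖x - y‖ := by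
      have := norm_sub_norm_le x y
      simp only [hR_def]; linarith
    have hhi : ‖x - y‖ ≤ R + 1 := by
      have := norm_sub_le x y
      simp only [hR_def]; linarith
    have h1 : (R - 1) ^ α ≤ ‖x - y‖ ^ α :=
      Real.rpow_le_rpow (le_of_lt hR1pos) hlo (le_of_lt hα)
    have h2 : ‖x - y‖ ^ α ≤ (R + 1) ^ α :=
      Real.rpow_le_rpow (norm_nonneg _) hhi (le_of_lt hα)
    exact ⟨inv_anti₀ (lt_of_lt_of_le hpow1 h1) h2, inv_anti₀ hpow1 h1⟩
  -- integrability of the kernel integrand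
  have hmeasg : Measurable (fun y : EuclideanSpace ℝ (Fin d) => ‖x - y‖ ^ α) := by
    fun_prop
  have hmeas : AEStronglyMeasurable (fun y : EuclideanSpace ℝ (Fin d) =>
      f y / ‖x - y‖ ^ α) volume := by
    simp only [div_eq_mul_inv]
    exact hf.aestronglyMeasurable.mul hmeasg.inv.aestronglyMeasurable
  have hptw : ∀ y, ‖f y / ‖x - y‖ ^ α‖ ≤ b * |f y| := by
    intro y
    by_cases hy : f y = 0
    · simp [hy, hb0.le]
    · obtain ⟨h1, h2⟩ := hbound y hy
      rw [Real.norm_eq_abs, abs_div, abs_of_nonneg (Real.rpow_nonneg (norm_nonneg _) α),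
        div_eq_mul_inv, mul_comm]
      exact mul_le_mul_of_nonneg_right h2 (abs_nonneg _)
  have hInt1 : Integrable (fun y : EuclideanSpace ℝ (Fin d) => f y / ‖x - y‖ ^ α) volume := by
    apply Integrable.mono (hf.abs.const_mul b) hmeas
    filter_upwards with y
    have := hptw y
    rwa [Real.norm_eq_abs (b * |f y|), abs_of_nonneg (by positivity)]
  have hInt2 : Integrable (fun y : EuclideanSpace ℝ (Fin d) =>
      f y * ((‖x - y‖ ^ α)⁻¹ - c₀)) volume := by
    have : (fun y : EuclideanSpace ℝ (Fin d) => f y * ((‖x - y‖ ^ α)⁻¹ - c₀))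
        = fun y => f y / ‖x - y‖ ^ α - c₀ * f y := by
      funext y; rw [div_eq_mul_inv]; ring
    rw [this]
    exact hInt1.sub (hf.const_mul c₀)
  -- shift by the constant c₀
  have hshift : (∫ y, f y / ‖x - y‖ ^ α)
      = ∫ y, f y * ((‖x - y‖ ^ α)⁻¹ - c₀) := by
    have heq : (fun y : EuclideanSpace ℝ (Fin d) => f y * ((‖x - y‖ ^ α)⁻¹ - c₀))
        = fun y => f y / ‖x - y‖ ^ α - c₀ * f y := by
      funext y; rw [div_eq_mul_inv]; ring
    rw [heq, integral_sub hInt1 (hf.const_mul c₀), integral_const_mul _ _, hzero,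
      mul_zero, sub_zero]
  -- bound the shifted integral
  have hmain : |∫ y, f y / ‖x - y‖ ^ α| ≤ ε * (b - a) := by
    rw [hshift]
    calc |∫ y, f y * ((‖x - y‖ ^ α)⁻¹ - c₀)|
        ≤ ∫ y, |f y * ((‖x - y‖ ^ α)⁻¹ - c₀)| := by
          simpa only [Real.norm_eq_abs] using
            norm_integral_le_integral_norm
              (fun y : EuclideanSpace ℝ (Fin d) => f y * ((‖x - y‖ ^ α)⁻¹ - c₀))
      _ ≤ ∫ y, (b - a) / 2 * |f y| := by
          apply integral_mono hInt2.abs (hf.abs.const_mul _)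
          intro y
          dsimp only
          by_cases hy : f y = 0
          · simp [hy]
          · obtain ⟨h1, h2⟩ := hbound y hy
            rw [abs_mul, mul_comm]
            apply mul_le_mul_of_nonneg_right _ (abs_nonneg _)
            rw [abs_le]
            constructor <;> simp only [hc₀_def] <;> linarith
      _ = (b - a) / 2 * (2 * ε) := by rw [integral_const_mul _ _, habs]
      _ = ε * (b - a) := by ring
  -- mean value theorem step : b - a ≤ 2 α / (R-1)^(α+1)
  have hmvt : b - a ≤ 2 * α / (R - 1) ^ (α + 1) := by
    obtain ⟨t, ht, hslope⟩ := exists_hasDerivAt_eq_slope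
      (fun u : ℝ => u ^ (-α)) (fun u : ℝ => (-α) * u ^ (-α - 1))
      (by linarith : R - 1 < R + 1)
      (by
        apply ContinuousOn.rpow_const continuousOn_id
        intro u hu
        left
        simp only [id_eq]
        have h1 := hu.1
        intro h; rw [h] at h1; linarith)
      (by
        intro u hu
        exact Real.hasDerivAt_rpow_const (Or.inl (by intro h; rw [h] at hu; have := hu.1; linarith)))
    have ht1 : R - 1 < t := ht.1
    have ht0 : (0:ℝ) < t := by linarith
    -- rewrite a and b as rpow with negative exponent
    have hbneg : b = (R - 1) ^ (-α) := by
      rw [Real.rpow_neg hR1pos.le]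
    have haneg : a = (R + 1) ^ (-α) := by
      rw [Real.rpow_neg hR2pos.le]
    have hdiff : b - a = 2 * α * t ^ (-α - 1) := by
      have h2 : (R + 1) - (R - 1) = 2 := by ring
      have : (-α) * t ^ (-α - 1) = ((R + 1) ^ (-α) - (R - 1) ^ (-α)) / 2 := by
        rw [hslope, h2]
      rw [hbneg, haneg]
      field_simp at this ⊢
      linarith
    rw [hdiff]
    have hmono : t ^ (-α - 1) ≤ (R - 1) ^ (-α - 1) := by
      rw [show (-α - 1 : ℝ) = -(α + 1) by ring, Real.rpow_neg ht0.le,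
        Real.rpow_neg hR1pos.le]
      apply inv_anti₀ (Real.rpow_pos_of_pos hR1pos _)
      exact Real.rpow_le_rpow hR1pos.le ht1.le (by linarith)
    calc 2 * α * t ^ (-α - 1) ≤ 2 * α * (R - 1) ^ (-α - 1) := by
          apply mul_le_mul_of_nonneg_left hmono (by linarith)
      _ = 2 * α / (R - 1) ^ (α + 1) := by
          rw [show (-α - 1 : ℝ) = -(α + 1) by ring, Real.rpow_neg hR1pos.le,
            div_eq_mul_inv]
  -- assemble
  have hfinal : |c⁻¹ * ∫ y, f y / ‖x - y‖ ^ α|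
      ≤ ε / c * (2 * α / (R - 1) ^ (α + 1)) := by
    rw [abs_mul, abs_inv, abs_of_pos hc_pos]
    have hba : 0 ≤ b - a := by linarith
    calc c⁻¹ * |∫ y, f y / ‖x - y‖ ^ α|
        ≤ c⁻¹ * (ε * (b - a)) := by
          apply mul_le_mul_of_nonneg_left hmain (by positivity)
      _ ≤ c⁻¹ * (ε * (2 * α / (R - 1) ^ (α + 1))) := by
          apply mul_le_mul_of_nonneg_left _ (by positivity)
          exact mul_le_mul_of_nonneg_left hmvt hε
      _ = ε / c * (2 * α / (R - 1) ^ (α + 1)) := by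
          rw [div_eq_mul_inv]; ring
  exact hfinal
end
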